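/- arXiv:1811.08336 — 2 statements merged into one kernel-verified Lean document; each statement's English description precedes it below -/
import Mathlib

section
/- For a reaction network satisfying Assumptions 1 and 2, let U be an intermediate species and X, Y non-intermediate species with Y ≠ X. If a monomial y^r u, r ≥ 0, appears in x^{(ℓ)} for some ℓ ≥ 1, then either U reacts to X, or ℓ ≥ 2, the network contains a block of reactions Y+Z_w ⇄ W → Z̃_w + X with Z_w ≠ X, and a monomial y^t u with t < r appears in z_w^{(i)} for some i ≤ ℓ−2. If, in addition, Y acts as an enzyme in all the reactions of the connected component determined by U, then X ∈ 𝒮_U, the block of reactions is Y+Z_w ⇄ W → Y + X, and it is contained in the connected component determined by U. Moreover, if U does not react to X and ℓ is the smallest integer such that a monomial y^r u appears in x^{(ℓ)}, then r ≥ 1, ℓ ≥ 2, and the monomial y^{r−1} u appears in z_w^{(i)} for some i ≤ ℓ−2. -/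
open MvPolynomial Finsupp

variable {σ : Type*}

/-- The total (Lie) derivative of a polynomial `φ` associated to the polynomial vector
field `f`: `φ̇ = Σ_x (∂φ/∂x)·f x`. -/
noncomputable def lieD [Fintype σ] (f : σ → MvPolynomial σ ℝ)
    (φ : MvPolynomial σ ℝ) : MvPolynomial σ ℝ :=
  ∑ x : σ, MvPolynomial.pderiv x φ * f x

/-- Iterated total (Lie) derivative. -/
noncomputable def lieDIter [Fintype σ] (f : σ → MvPolynomial σ ℝ) :
    ℕ → MvPolynomial σ ℝ → MvPolynomial σ ℝ
  | 0, φ => φ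
  | n + 1, φ => lieD f (lieDIter f n φ)

/-- Indicator of a species inside a complex, as a real number. -/
def ind [DecidableEq σ] (a x : σ) : ℝ := if a = x then 1 else 0

/-- A chemical reaction network of the structural form of Assumption 1: the connected
components are indexed by `ι`; component `i` is
`Y i + S i 0 ⇄ U i 1 → Y i + S i 1 ⇄ U i 2 → ⋯ ⇄ U i (L i) → Y i + S i (L i)`,
with rate constants `a_{i,j}, b_{i,j}, c_{i,j}` for the reactions
`Y i + S i (j-1) → U i j`, `U i j → Y i + S i (j-1)`, `U i j → Y i + S i j`
(`1 ≤ j ≤ L i`). Only the values `S i j` for `j ≤ L i` and `U i j` for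
`1 ≤ j ≤ L i` are relevant. -/
structure A1Network (σ : Type*) where
  ι : Type
  [fintypeι : Fintype ι]
  L : ι → ℕ
  Lpos : ∀ i, 1 ≤ L i
  Y : ι → σ
  S : ι → ℕ → σ
  U : ι → ℕ → σ

attribute [instance] A1Network.fintypeι

namespace A1Network

variable [Fintype σ] [DecidableEq σ]

/-- Rate-constant index: component `i`, block `j+1` (for `j : Fin (L i)`), and
`0, 1, 2` for the constants `a, b, c` of the block. -/
def Param (N : A1Network σ) : Type := (i : N.ι) × Fin (N.L i) × Fin 3

instance (N : A1Network σ) : Fintype N.Param :=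
  inferInstanceAs (Fintype ((i : N.ι) × Fin (N.L i) × Fin 3))

/-- `x` is an intermediate species of the network. -/
def inter (N : A1Network σ) (x : σ) : Prop :=
  ∃ i, ∃ j : Fin (N.L i), x = N.U i ((j : ℕ) + 1)

/-- The non-intermediate `x₁` reacts with the non-intermediate `x₂`
(a reaction `x₁ + x₂ → U` exists). -/
def reactsWith (N : A1Network σ) (x₁ x₂ : σ) : Prop :=
  ∃ i, ∃ j : Fin (N.L i),
    (x₁ = N.Y i ∧ x₂ = N.S i (j : ℕ)) ∨ (x₂ = N.Y i ∧ x₁ = N.S i (j : ℕ))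

/-- The intermediate `u` reacts to the non-intermediate `x`
(a reaction `u → x + X₂` exists). -/
def reactsTo (N : A1Network σ) (u x : σ) : Prop :=
  ∃ i, ∃ j : Fin (N.L i), u = N.U i ((j : ℕ) + 1) ∧
    (x = N.Y i ∨ x = N.S i (j : ℕ) ∨ x = N.S i ((j : ℕ) + 1))

/-- The distinctness/uniqueness requirements of Assumption 1: the intermediates of the
entire network are pairwise distinct and distinct from all non-intermediates; the
non-intermediates of one component are pairwise distinct; each complex lies in a
unique connected component. -/
structure Assumption1 (N : A1Network σ) : Prop where
  U_inj : ∀ i (j : Fin (N.L i)) i' (j' : Fin (N.L i')),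
    N.U i ((j : ℕ) + 1) = N.U i' ((j' : ℕ) + 1) → i = i' ∧ (j : ℕ) = (j' : ℕ)
  U_ne_Y : ∀ i (j : Fin (N.L i)) i', N.U i ((j : ℕ) + 1) ≠ N.Y i'
  U_ne_S : ∀ i (j : Fin (N.L i)) i' j', j' ≤ N.L i' → N.U i ((j : ℕ) + 1) ≠ N.S i' j'
  S_inj : ∀ i j j', j ≤ N.L i → j' ≤ N.L i → N.S i j = N.S i j' → j = j'
  complex_unique : ∀ i i' j j', j ≤ N.L i → j' ≤ N.L i' →
    (∀ x : σ, ind (N.Y i) x + ind (N.S i j) x = ind (N.Y i') x + ind (N.S i' j') x) →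
    i = i'

/-- `part` is a partition of the species as in Assumption 2: intermediates form class `0`;
all the substrates and products of a component lie in one class `α ≥ 1` which contains
neither the enzyme of the component nor any intermediate. -/
def IsPartition (N : A1Network σ) (part : σ → ℕ) : Prop :=
  (∀ x, N.inter x → part x = 0) ∧
  (∀ i : N.ι, ∃ α, 1 ≤ α ∧ (∀ j, j ≤ N.L i → part (N.S i j) = α) ∧
    part (N.Y i) ≠ α ∧ part (N.Y i) ≠ 0)

/-- Assumption 2: there exists a partition as above. -/
def Assumption2 (N : A1Network σ) : Prop := ∃ part, N.IsPartition part

/-- The mass-action right-hand side of the induced dynamical system: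
`ẋ = Σ_{y→y'} k_{yy'} x^y (y'-y)`. -/
noncomputable def rhs (N : A1Network σ) (k : N.Param → ℝ) (x : σ) : MvPolynomial σ ℝ :=
  ∑ i : N.ι, ∑ j : Fin (N.L i),
    (C (k ⟨i, j, 0⟩ *
          (ind (N.U i ((j : ℕ) + 1)) x - ind (N.Y i) x - ind (N.S i (j : ℕ)) x)) *
        (X (N.Y i) * X (N.S i (j : ℕ)))
      + C (k ⟨i, j, 1⟩ *
          (ind (N.Y i) x + ind (N.S i (j : ℕ)) x - ind (N.U i ((j : ℕ) + 1)) x)) *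
        X (N.U i ((j : ℕ) + 1))
      + C (k ⟨i, j, 2⟩ *
          (ind (N.Y i) x + ind (N.S i ((j : ℕ) + 1)) x - ind (N.U i ((j : ℕ) + 1)) x)) *
        X (N.U i ((j : ℕ) + 1)))

/-- `x^{(ℓ)}(x, k)`: the `ℓ`-th iterated total derivative of the variable `x`. -/
noncomputable def deriv (N : A1Network σ) (k : N.Param → ℝ) (ℓ : ℕ) (x : σ) :
    MvPolynomial σ ℝ :=
  lieDIter (N.rhs k) ℓ (X x)

/-- The map `ψ` on rate constants is identifiable from the set of variables `T` with `D`
derivatives: whenever two positive rate vectors give the same derivatives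
`x^{(ℓ)}`, `1 ≤ ℓ ≤ D`, `x ∈ T`, as polynomials, the values of `ψ` agree. -/
def IdentifiableFrom {α : Type*} (N : A1Network σ) (ψ : (N.Param → ℝ) → α)
    (T : Set σ) (D : ℕ) : Prop :=
  ∀ k₁ k₂ : N.Param → ℝ, (∀ r, 0 < k₁ r) → (∀ r, 0 < k₂ r) →
    (∀ x ∈ T, ∀ ℓ, 1 ≤ ℓ → ℓ ≤ D → N.deriv k₁ ℓ x = N.deriv k₂ ℓ x) →
    ψ k₁ = ψ k₂

set_option linter.unusedSectionVars false
set_option linter.unusedTactic false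
lemma coeff_pderiv' (w : σ) (φ : MvPolynomial σ ℝ) (m : σ →₀ ℕ) :
    MvPolynomial.coeff m (MvPolynomial.pderiv w φ) =
      ((m w : ℝ) + 1) * MvPolynomial.coeff (m + Finsupp.single w 1) φ := by
  induction φ using MvPolynomial.induction_on' with
  | monomial s a =>
    rw [pderiv_monomial]
    by_cases h : s w = 0
    · rw [coeff_monomial, coeff_monomial]
      have h2 : ¬ s = m + Finsupp.single w 1 := by
        intro he; apply absurd h; rw [he]; simp
      rw [if_neg h2, h]
      simp
    · rw [coeff_monomial, coeff_monomial]
      by_cases he : s - Finsupp.single w 1 = m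
      · have hsm : s = m + Finsupp.single w 1 := by
          rw [← he]; ext a; simp only [Finsupp.add_apply, Finsupp.tsub_apply, Finsupp.single_apply]
          rcases eq_or_ne w a with rfl | hne
          · simp; omega
          · simp [hne]
        rw [if_pos he, if_pos hsm]
        have : s w = m w + 1 := by rw [hsm]; simp
        rw [this]
        push_cast
        ring
      · have hne2 : ¬ s = m + Finsupp.single w 1 := by
          intro hh; apply he; rw [hh]; ext a
          simp only [Finsupp.add_apply, Finsupp.tsub_apply, Finsupp.single_apply]
          rcases eq_or_ne w a with rfl | hne
          · simp
          · simp [hne]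
        rw [if_neg he, if_neg hne2]
        simp
  | add p q hp hq => rw [map_add, MvPolynomial.coeff_add, MvPolynomial.coeff_add, hp, hq]; ring

variable (N : A1Network σ) (k : N.Param → ℝ)

/-- The `(i,j)` block summand of the right hand side at species `x`. -/
noncomputable def blockPoly (x : σ) (i : N.ι) (j : Fin (N.L i)) : MvPolynomial σ ℝ :=
  C (k ⟨i, j, 0⟩ *
        (ind (N.U i ((j : ℕ) + 1)) x - ind (N.Y i) x - ind (N.S i (j : ℕ)) x)) *
      (X (N.Y i) * X (N.S i (j : ℕ)))
    + C (k ⟨i, j, 1⟩ *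
        (ind (N.Y i) x + ind (N.S i (j : ℕ)) x - ind (N.U i ((j : ℕ) + 1)) x)) *
      X (N.U i ((j : ℕ) + 1))
    + C (k ⟨i, j, 2⟩ *
        (ind (N.Y i) x + ind (N.S i ((j : ℕ) + 1)) x - ind (N.U i ((j : ℕ) + 1)) x)) *
      X (N.U i ((j : ℕ) + 1))

lemma rhs_eq_blockPoly (x : σ) : N.rhs k x = ∑ i, ∑ j, N.blockPoly k x i j := rfl

/-- One term of the expansion of a coefficient of the Lie derivative. -/
noncomputable def G (m : σ →₀ ℕ) (φ : MvPolynomial σ ℝ) (w : σ) (i : N.ι)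
    (j : Fin (N.L i)) : ℝ :=
  MvPolynomial.coeff m (MvPolynomial.pderiv w φ * N.blockPoly k w i j)

lemma coeff_lieD (m : σ →₀ ℕ) (φ : MvPolynomial σ ℝ) :
    MvPolynomial.coeff m (lieD (N.rhs k) φ) = ∑ w, ∑ i, ∑ j, N.G k m φ w i j := by
  unfold lieD G
  rw [MvPolynomial.coeff_sum]
  refine Finset.sum_congr rfl fun w _ => ?_
  rw [rhs_eq_blockPoly, Finset.mul_sum, MvPolynomial.coeff_sum]
  refine Finset.sum_congr rfl fun i _ => ?_
  rw [Finset.mul_sum, MvPolynomial.coeff_sum]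

lemma G_eq (m : σ →₀ ℕ) (φ : MvPolynomial σ ℝ) (w : σ) (i : N.ι) (j : Fin (N.L i)) :
    N.G k m φ w i j =
      k ⟨i, j, 0⟩ * (ind (N.U i ((j : ℕ) + 1)) w - ind (N.Y i) w - ind (N.S i (j : ℕ)) w) *
        (if (Finsupp.single (N.Y i) 1 + Finsupp.single (N.S i (j : ℕ)) 1 : σ →₀ ℕ) ≤ m
         then ((((m - (Finsupp.single (N.Y i) 1 + Finsupp.single (N.S i (j : ℕ)) 1)) : σ →₀ ℕ) w : ℝ) + 1) *
                MvPolynomial.coeff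
                  ((m - (Finsupp.single (N.Y i) 1 + Finsupp.single (N.S i (j : ℕ)) 1)) +
                    Finsupp.single w 1) φ
         else 0)
      + (k ⟨i, j, 1⟩ * (ind (N.Y i) w + ind (N.S i (j : ℕ)) w - ind (N.U i ((j : ℕ) + 1)) w)
         + k ⟨i, j, 2⟩ *
            (ind (N.Y i) w + ind (N.S i ((j : ℕ) + 1)) w - ind (N.U i ((j : ℕ) + 1)) w)) *
        (if (Finsupp.single (N.U i ((j : ℕ) + 1)) 1 : σ →₀ ℕ) ≤ m
         then ((((m - Finsupp.single (N.U i ((j : ℕ) + 1)) 1 : σ →₀ ℕ)) w : ℝ) + 1) *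
                MvPolynomial.coeff
                  ((m - Finsupp.single (N.U i ((j : ℕ) + 1)) 1) + Finsupp.single w 1) φ
         else 0) := by
  have hXX : (X (N.Y i) * X (N.S i (j : ℕ)) : MvPolynomial σ ℝ)
      = monomial (Finsupp.single (N.Y i) 1 + Finsupp.single (N.S i (j : ℕ)) 1) 1 := by
    rw [MvPolynomial.X, MvPolynomial.X, MvPolynomial.monomial_mul, mul_one]
  have hX : ∀ c : ℝ, (C c * X (N.U i ((j : ℕ) + 1)) : MvPolynomial σ ℝ)
      = monomial (Finsupp.single (N.U i ((j : ℕ) + 1)) 1) c := by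
    intro c; rw [MvPolynomial.X, MvPolynomial.C_mul_monomial, mul_one]
  unfold G blockPoly
  rw [hXX, MvPolynomial.C_mul_monomial, mul_one, hX, hX]
  rw [mul_add, mul_add, MvPolynomial.coeff_add, MvPolynomial.coeff_add]
  rw [MvPolynomial.coeff_mul_monomial', MvPolynomial.coeff_mul_monomial',
    MvPolynomial.coeff_mul_monomial']
  split_ifs <;> (try simp only [coeff_pderiv']) <;> ring


/-- The basic monomial shape `y^s · v`. -/
noncomputable def crnMon (y : σ) (s : ℕ) (v : σ) : σ →₀ ℕ :=
  Finsupp.single y s + Finsupp.single v 1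

lemma crnMon_def (y : σ) (s : ℕ) (v : σ) :
    crnMon y s v = Finsupp.single y s + Finsupp.single v 1 := rfl

lemma crnMon_apply (y v a : σ) (s : ℕ) :
    crnMon y s v a = (if y = a then s else 0) + (if v = a then 1 else 0) := by
  simp [crnMon, Finsupp.single_apply]

lemma crnMon_self (y : σ) (s : ℕ) : crnMon y s y = Finsupp.single y (s + 1) := by
  ext a; rw [crnMon_apply, Finsupp.single_apply]; split_ifs <;> omega

lemma crn_pt {f g : σ →₀ ℕ} (h : f ≤ g) (t : σ) : f t ≤ g t := Finsupp.le_def.mp h t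

lemma crn_quad_le {y v a b : σ} {s : ℕ} (hab : a ≠ b) (hvy : v ≠ y)
    (h : Finsupp.single a 1 + Finsupp.single b 1 ≤ crnMon y s v) :
    ((a = y ∧ b = v) ∨ (a = v ∧ b = y)) ∧ 1 ≤ s := by
  have ha : a = y ∨ a = v := by
    rcases eq_or_ne a y with h'|h'
    · exact Or.inl h'
    rcases eq_or_ne a v with h2|h2
    · exact Or.inr h2
    exfalso
    have := crn_pt h a
    rw [crnMon_apply] at this
    simp [Finsupp.single_apply, Ne.symm h', Ne.symm h2] at this
  have hb : b = y ∨ b = v := by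
    rcases eq_or_ne b y with h'|h'
    · exact Or.inl h'
    rcases eq_or_ne b v with h2|h2
    · exact Or.inr h2
    exfalso
    have := crn_pt h b
    rw [crnMon_apply] at this
    simp [Finsupp.single_apply, Ne.symm h', Ne.symm h2] at this
  have hs : 1 ≤ s := by
    have := crn_pt h y
    rw [crnMon_apply] at this
    simp only [Finsupp.add_apply, Finsupp.single_apply] at this
    rcases ha with ha|ha <;> rcases hb with hb|hb
    · exact absurd (ha.trans hb.symm) hab
    · simp [ha, hb, hvy] at this; omega
    · simp [ha, hb, hvy] at this; omega
    · exact absurd (ha.trans hb.symm) hab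
  refine ⟨?_, hs⟩
  rcases ha with ha|ha <;> rcases hb with hb|hb
  · exact absurd (ha.trans hb.symm) hab
  · exact Or.inl ⟨ha, hb⟩
  · exact Or.inr ⟨ha, hb⟩
  · exact absurd (ha.trans hb.symm) hab

lemma crn_lin_le {y v c : σ} {s : ℕ} (h : Finsupp.single c 1 ≤ crnMon y s v) :
    c = y ∨ c = v := by
  rcases eq_or_ne c y with h'|h'
  · exact Or.inl h'
  rcases eq_or_ne c v with h2|h2
  · exact Or.inr h2
  exfalso
  have := crn_pt h c
  rw [crnMon_apply] at this
  simp [Finsupp.single_apply, Ne.symm h', Ne.symm h2] at this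

lemma crn_quad_le_pure {y a b : σ} {s : ℕ}
    (h : Finsupp.single a 1 + Finsupp.single b 1 ≤ Finsupp.single y s) :
    a = y ∧ b = y := by
  constructor
  · by_contra h'
    have := crn_pt h a
    simp [Finsupp.single_apply, Ne.symm h'] at this
  · by_contra h'
    have := crn_pt h b
    simp [Finsupp.single_apply, Ne.symm h'] at this

lemma crn_lin_le_pure {y c : σ} {s : ℕ} (h : Finsupp.single c 1 ≤ Finsupp.single y s) :
    c = y := by
  by_contra h'
  have := crn_pt h c
  simp [Finsupp.single_apply, Ne.symm h'] at this

lemma crn_sub_quad {y v : σ} (hvy : v ≠ y) (s : ℕ) :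
    crnMon y s v - (Finsupp.single y 1 + Finsupp.single v 1) = Finsupp.single y (s - 1) := by
  ext a
  simp only [Finsupp.tsub_apply, Finsupp.add_apply, Finsupp.single_apply, crnMon_apply]
  by_cases h1 : y = a <;> by_cases h2 : v = a
  · exact absurd (h2.trans h1.symm) hvy
  · simp [h1, h2]
  · simp [h1, h2]
  · simp [h1, h2]

lemma crn_sub_quad' {y v : σ} (hvy : v ≠ y) (s : ℕ) :
    crnMon y s v - (Finsupp.single v 1 + Finsupp.single y 1) = Finsupp.single y (s - 1) := by
  rw [add_comm]; exact crn_sub_quad hvy s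

lemma crn_sub_lin {y v : σ} (hvy : v ≠ y) (s : ℕ) :
    crnMon y s v - Finsupp.single v 1 = Finsupp.single y s := by
  ext a
  simp only [Finsupp.tsub_apply, Finsupp.single_apply, crnMon_apply]
  by_cases h1 : y = a <;> by_cases h2 : v = a
  · exact absurd (h2.trans h1.symm) hvy
  · simp [h1, h2]
  · simp [h1, h2]
  · simp [h1, h2]

lemma crn_single_add_single (y : σ) (t : ℕ) (w : σ) :
    Finsupp.single y t + Finsupp.single w 1 = crnMon y t w := rfl

lemma crn_mon_eq_single {y v x : σ} {s : ℕ} (hvy : v ≠ y) (hyx : y ≠ x)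
    (h : crnMon y s v = Finsupp.single x 1) : s = 0 ∧ v = x := by
  have hs : s = 0 := by
    have := DFunLike.congr_fun h y
    simp only [crnMon_apply, Finsupp.single_apply] at this
    simpa [hvy, hyx, Ne.symm hvy, Ne.symm hyx] using this
  refine ⟨hs, ?_⟩
  by_contra h'
  have := DFunLike.congr_fun h v
  simp only [crnMon_apply, Finsupp.single_apply] at this
  simp [Ne.symm hvy, h', Ne.symm h'] at this

lemma crn_mon_eq_single' {y x : σ} : crnMon y 0 x = Finsupp.single x 1 := by
  ext a; simp [crnMon_apply, Finsupp.single_apply]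

lemma crn_pure_ne_single {y x : σ} (hyx : y ≠ x) (s : ℕ) :
    Finsupp.single y s ≠ Finsupp.single x 1 := by
  intro h
  have := DFunLike.congr_fun h x
  simp [Finsupp.single_apply, hyx] at this

lemma crn_mon_ne_pure {y v : σ} (hvy : v ≠ y) (s t : ℕ) :
    crnMon y s v ≠ Finsupp.single y t := by
  intro h
  have := DFunLike.congr_fun h v
  simp [crnMon_apply, Finsupp.single_apply, Ne.symm hvy, hvy] at this

lemma ind_self (a : σ) : ind a a = 1 := by simp [ind]
lemma ind_ne {a x : σ} (h : a ≠ x) : ind a x = 0 := by simp [ind, h]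



section Facts

variable {N : A1Network σ} {part : σ → ℕ}

lemma inter_U (N : A1Network σ) (i : N.ι) (j : Fin (N.L i)) :
    N.inter (N.U i ((j : ℕ) + 1)) := ⟨i, j, rfl⟩

lemma fact_nonint_Y (hp : N.IsPartition part) (i : N.ι) : ¬ N.inter (N.Y i) := by
  intro hi
  obtain ⟨α, hα, hS, hY, hY0⟩ := hp.2 i
  exact hY0 (hp.1 _ hi)

lemma fact_nonint_S (hp : N.IsPartition part) (i : N.ι) (j : ℕ) (hj : j ≤ N.L i) :
    ¬ N.inter (N.S i j) := by
  intro hi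
  obtain ⟨α, hα, hS, hY, hY0⟩ := hp.2 i
  have := hp.1 _ hi
  rw [hS j hj] at this
  omega

lemma fact_Y_ne_S (hp : N.IsPartition part) (i : N.ι) (j : ℕ) (hj : j ≤ N.L i) :
    N.Y i ≠ N.S i j := by
  intro h
  obtain ⟨α, hα, hS, hY, hY0⟩ := hp.2 i
  exact hY (h ▸ hS j hj)

lemma fact_S_ne_S (h1 : N.Assumption1) (i : N.ι) (j j' : ℕ) (hj : j ≤ N.L i)
    (hj' : j' ≤ N.L i) (hne : j ≠ j') : N.S i j ≠ N.S i j' :=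
  fun h => hne (h1.S_inj i j j' hj hj' h)

lemma fact_ne_of_nonint {a b : σ} (ha : N.inter a) (hb : ¬ N.inter b) : a ≠ b :=
  fun h => hb (h ▸ ha)

end Facts

-- ======= classification of the terms `G` =======
section Class

variable {N : A1Network σ} {k : N.Param → ℝ} {part : σ → ℕ} {y : σ}

lemma crn_quad_le_intro {y v : σ} (hvy : v ≠ y) {s : ℕ} (hs : 1 ≤ s) :
    Finsupp.single y 1 + Finsupp.single v 1 ≤ crnMon y s v := by
  rw [Finsupp.le_def]; intro t
  simp only [Finsupp.add_apply, Finsupp.single_apply, crnMon_apply]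
  split_ifs <;> omega

lemma crn_lin_le_intro (y v : σ) (s : ℕ) : Finsupp.single v 1 ≤ crnMon y s v := by
  rw [Finsupp.le_def]; intro t
  simp only [Finsupp.single_apply, crnMon_apply]
  split_ifs <;> omega

/-- `T3`-transition value: consuming the non-`y` reactant of a block whose reactant
complex is `{y, v}`. -/
lemma val_B_T3 (hy : ¬ N.inter y) {v : σ} (hv : ¬ N.inter v) (hvy : v ≠ y)
    {i : N.ι} {j : Fin (N.L i)}
    (hpair : (N.Y i = y ∧ N.S i (j : ℕ) = v) ∨ (N.Y i = v ∧ N.S i (j : ℕ) = y))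
    {s : ℕ} (hs : 1 ≤ s) (φ : MvPolynomial σ ℝ) :
    N.G k (crnMon y s v) φ v i j
      = -(k ⟨i, j, 0⟩) * MvPolynomial.coeff (crnMon y (s - 1) v) φ := by
  have hUv : N.U i ((j : ℕ) + 1) ≠ v := fact_ne_of_nonint (inter_U N i j) hv
  have hUy : N.U i ((j : ℕ) + 1) ≠ y := fact_ne_of_nonint (inter_U N i j) hy
  have hl : ¬ (Finsupp.single (N.U i ((j : ℕ) + 1)) 1 ≤ crnMon y s v) := by
    intro h; rcases crn_lin_le h with h | h; exacts [hUy h, hUv h]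
  have hq : (Finsupp.single (N.Y i) 1 + Finsupp.single (N.S i (j : ℕ)) 1) ≤ crnMon y s v := by
    rcases hpair with ⟨hY, hS⟩ | ⟨hY, hS⟩
    · rw [hY, hS]; exact crn_quad_le_intro hvy hs
    · rw [hY, hS, add_comm]; exact crn_quad_le_intro hvy hs
  have hsub : crnMon y s v - (Finsupp.single (N.Y i) 1 + Finsupp.single (N.S i (j : ℕ)) 1)
      = Finsupp.single y (s - 1) := by
    rcases hpair with ⟨hY, hS⟩ | ⟨hY, hS⟩
    · rw [hY, hS]; exact crn_sub_quad hvy s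
    · rw [hY, hS]; exact crn_sub_quad' hvy s
  have e3 : (Finsupp.single y (s - 1)) v = 0 := by
    simp [Finsupp.single_apply, Ne.symm hvy]
  rw [G_eq, if_pos hq, if_neg hl, hsub, crn_single_add_single, e3]
  have eU : ind (N.U i ((j : ℕ) + 1)) v = 0 := ind_ne hUv
  rcases hpair with ⟨hY, hS⟩ | ⟨hY, hS⟩
  · rw [hY, hS, eU, ind_ne (Ne.symm hvy), ind_self]
    push_cast; ring
  · rw [hY, hS, eU, ind_self, ind_ne (Ne.symm hvy)]
    push_cast; ring

/-- `T4`-transition value: consuming the intermediate of a block whose reactant complex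
is `{y, v}` by the forward reaction. -/
lemma val_B_T4 (h1 : N.Assumption1) (hy : ¬ N.inter y) {v : σ} (hv : ¬ N.inter v)
    (hvy : v ≠ y) {i : N.ι} {j : Fin (N.L i)}
    (hpair : (N.Y i = y ∧ N.S i (j : ℕ) = v) ∨ (N.Y i = v ∧ N.S i (j : ℕ) = y))
    {s : ℕ} (hs : 1 ≤ s) (φ : MvPolynomial σ ℝ) :
    N.G k (crnMon y s v) φ (N.U i ((j : ℕ) + 1)) i j
      = k ⟨i, j, 0⟩ * MvPolynomial.coeff (crnMon y (s - 1) (N.U i ((j : ℕ) + 1))) φ := by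
  have hUv : N.U i ((j : ℕ) + 1) ≠ v := fact_ne_of_nonint (inter_U N i j) hv
  have hUy : N.U i ((j : ℕ) + 1) ≠ y := fact_ne_of_nonint (inter_U N i j) hy
  have hl : ¬ (Finsupp.single (N.U i ((j : ℕ) + 1)) 1 ≤ crnMon y s v) := by
    intro h; rcases crn_lin_le h with h | h; exacts [hUy h, hUv h]
  have hq : (Finsupp.single (N.Y i) 1 + Finsupp.single (N.S i (j : ℕ)) 1) ≤ crnMon y s v := by
    rcases hpair with ⟨hY, hS⟩ | ⟨hY, hS⟩
    · rw [hY, hS]; exact crn_quad_le_intro hvy hs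
    · rw [hY, hS, add_comm]; exact crn_quad_le_intro hvy hs
  have hsub : crnMon y s v - (Finsupp.single (N.Y i) 1 + Finsupp.single (N.S i (j : ℕ)) 1)
      = Finsupp.single y (s - 1) := by
    rcases hpair with ⟨hY, hS⟩ | ⟨hY, hS⟩
    · rw [hY, hS]; exact crn_sub_quad hvy s
    · rw [hY, hS]; exact crn_sub_quad' hvy s
  have e3 : (Finsupp.single y (s - 1)) (N.U i ((j : ℕ) + 1)) = 0 := by
    simp [Finsupp.single_apply, Ne.symm hUy]
  rw [G_eq, if_pos hq, if_neg hl, hsub, crn_single_add_single, e3]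
  rw [ind_self, ind_ne (Ne.symm (h1.U_ne_Y i j i)),
    ind_ne (Ne.symm (h1.U_ne_S i j i (j : ℕ) (le_of_lt j.isLt)))]
  push_cast; ring

/-- `T1`-transition value: persistence of an intermediate-containing monomial. -/
lemma val_A_pers (h1 : N.Assumption1) (hp : N.IsPartition part) (hy : ¬ N.inter y)
    {i0 : N.ι} {j0 : Fin (N.L i0)} (s : ℕ) (φ : MvPolynomial σ ℝ) :
    N.G k (crnMon y s (N.U i0 ((j0 : ℕ) + 1))) φ (N.U i0 ((j0 : ℕ) + 1)) i0 j0
      = -(k ⟨i0, j0, 1⟩ + k ⟨i0, j0, 2⟩)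
          * MvPolynomial.coeff (crnMon y s (N.U i0 ((j0 : ℕ) + 1))) φ := by
  set u' := N.U i0 ((j0 : ℕ) + 1) with hu'
  have hu'y : u' ≠ y := fact_ne_of_nonint (inter_U N i0 j0) hy
  have hq : ¬ (Finsupp.single (N.Y i0) 1 + Finsupp.single (N.S i0 (j0 : ℕ)) 1
      ≤ crnMon y s u') := by
    intro h
    rcases (crn_quad_le (fact_Y_ne_S hp i0 (j0 : ℕ) (le_of_lt j0.isLt)) hu'y h).1 with
      ⟨hY, hS⟩ | ⟨hY, hS⟩
    · exact h1.U_ne_S i0 j0 i0 (j0 : ℕ) (le_of_lt j0.isLt) hS.symm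
    · exact h1.U_ne_Y i0 j0 i0 hY.symm
  have hl : Finsupp.single u' 1 ≤ crnMon y s u' := crn_lin_le_intro y u' s
  have hsub : crnMon y s u' - Finsupp.single u' 1 = Finsupp.single y s := crn_sub_lin hu'y s
  have e3 : (Finsupp.single y s) u' = 0 := by simp [Finsupp.single_apply, Ne.symm hu'y]
  rw [G_eq, if_neg hq, if_pos hl, hsub, crn_single_add_single, e3]
  rw [ind_self, ind_ne (Ne.symm (h1.U_ne_Y i0 j0 i0)),
    ind_ne (Ne.symm (h1.U_ne_S i0 j0 i0 (j0 : ℕ) (le_of_lt j0.isLt))),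
    ind_ne (Ne.symm (h1.U_ne_S i0 j0 i0 ((j0 : ℕ) + 1) j0.isLt))]
  push_cast; ring

/-- `T2`-transition value: creation of an intermediate from one of its adjacent
non-intermediate species. -/
lemma val_A_in (h1 : N.Assumption1) (hp : N.IsPartition part) (hk : ∀ r, 0 < k r)
    (hy : ¬ N.inter y) {i0 : N.ι} {j0 : Fin (N.L i0)} {w' : σ}
    (hw' : w' = N.Y i0 ∨ w' = N.S i0 (j0 : ℕ) ∨ w' = N.S i0 ((j0 : ℕ) + 1))
    (s : ℕ) (φ : MvPolynomial σ ℝ) :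
    ∃ c' : ℝ, 0 < c' ∧
      N.G k (crnMon y s (N.U i0 ((j0 : ℕ) + 1))) φ w' i0 j0
        = c' * MvPolynomial.coeff (crnMon y s w') φ := by
  set u' := N.U i0 ((j0 : ℕ) + 1) with hu'
  have hu'y : u' ≠ y := fact_ne_of_nonint (inter_U N i0 j0) hy
  have hq : ¬ (Finsupp.single (N.Y i0) 1 + Finsupp.single (N.S i0 (j0 : ℕ)) 1
      ≤ crnMon y s u') := by
    intro h
    rcases (crn_quad_le (fact_Y_ne_S hp i0 (j0 : ℕ) (le_of_lt j0.isLt)) hu'y h).1 with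
      ⟨hY, hS⟩ | ⟨hY, hS⟩
    · exact h1.U_ne_S i0 j0 i0 (j0 : ℕ) (le_of_lt j0.isLt) hS.symm
    · exact h1.U_ne_Y i0 j0 i0 hY.symm
  have hl : Finsupp.single u' 1 ≤ crnMon y s u' := crn_lin_le_intro y u' s
  have hsub : crnMon y s u' - Finsupp.single u' 1 = Finsupp.single y s := crn_sub_lin hu'y s
  rw [G_eq, if_neg hq, if_pos hl, hsub, crn_single_add_single]
  have hmult : (0:ℝ) < ((Finsupp.single y s) w' : ℝ) + 1 := by positivity
  rcases hw' with hw' | hw' | hw'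
  · refine ⟨(k ⟨i0, j0, 1⟩ + k ⟨i0, j0, 2⟩) * (((Finsupp.single y s) w' : ℝ) + 1),
      by have := hk ⟨i0, j0, 1⟩; have := hk ⟨i0, j0, 2⟩; positivity, ?_⟩
    rw [hw']
    rw [ind_self, ind_ne (fact_Y_ne_S hp i0 (j0 : ℕ) (le_of_lt j0.isLt)).symm,
      ind_ne (fact_Y_ne_S hp i0 ((j0 : ℕ) + 1) j0.isLt).symm,
      ind_ne (h1.U_ne_Y i0 j0 i0)]
    push_cast; ring
  · refine ⟨k ⟨i0, j0, 1⟩ * (((Finsupp.single y s) w' : ℝ) + 1), by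
      have := hk ⟨i0, j0, 1⟩; positivity, ?_⟩
    rw [hw']
    rw [ind_self, ind_ne (fact_Y_ne_S hp i0 (j0 : ℕ) (le_of_lt j0.isLt)),
      ind_ne (fact_S_ne_S h1 i0 ((j0 : ℕ) + 1) (j0 : ℕ) j0.isLt (le_of_lt j0.isLt)
        (by omega)),
      ind_ne (h1.U_ne_S i0 j0 i0 (j0 : ℕ) (le_of_lt j0.isLt))]
    push_cast; ring
  · refine ⟨k ⟨i0, j0, 2⟩ * (((Finsupp.single y s) w' : ℝ) + 1), by
      have := hk ⟨i0, j0, 2⟩; positivity, ?_⟩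
    rw [hw']
    rw [ind_self, ind_ne (fact_Y_ne_S hp i0 ((j0 : ℕ) + 1) j0.isLt),
      ind_ne (fact_S_ne_S h1 i0 (j0 : ℕ) ((j0 : ℕ) + 1) (le_of_lt j0.isLt) j0.isLt
        (by omega)),
      ind_ne (h1.U_ne_S i0 j0 i0 ((j0 : ℕ) + 1) j0.isLt)]
    push_cast; ring


set_option linter.unusedTactic false

lemma G_pure (h1 : N.Assumption1) (hp : N.IsPartition part) (hy : ¬ N.inter y)
    (s : ℕ) (φ : MvPolynomial σ ℝ) (w : σ) (i : N.ι) (j : Fin (N.L i)) :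
    N.G k (Finsupp.single y s) φ w i j = 0 := by
  have hq : ¬ (Finsupp.single (N.Y i) 1 + Finsupp.single (N.S i (j : ℕ)) 1
      ≤ Finsupp.single y s) := by
    intro h
    obtain ⟨ha, hb⟩ := crn_quad_le_pure h
    exact fact_Y_ne_S hp i (j : ℕ) (le_of_lt j.isLt) (ha.trans hb.symm)
  have hl : ¬ (Finsupp.single (N.U i ((j : ℕ) + 1)) 1 ≤ Finsupp.single y s) := by
    intro h
    exact hy (crn_lin_le_pure h ▸ inter_U N i j)
  rw [G_eq, if_neg hq, if_neg hl]
  ring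

lemma coeff_lieD_pure (h1 : N.Assumption1) (hp : N.IsPartition part) (hy : ¬ N.inter y)
    (s : ℕ) (φ : MvPolynomial σ ℝ) :
    MvPolynomial.coeff (Finsupp.single y s) (lieD (N.rhs k) φ) = 0 := by
  rw [coeff_lieD]
  refine Finset.sum_eq_zero fun w _ => Finset.sum_eq_zero fun i _ =>
    Finset.sum_eq_zero fun j _ => G_pure h1 hp hy s φ w i j

/-- Classification of the terms contributing to the coefficient of a monomial
`y^s·v`, `v` a non-intermediate distinct from `y`. -/
lemma G_B_cases (h1 : N.Assumption1) (hp : N.IsPartition part) (hk : ∀ r, 0 < k r)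
    (hy : ¬ N.inter y) {v : σ} (hv : ¬ N.inter v) (hvy : v ≠ y)
    (s : ℕ) (φ : MvPolynomial σ ℝ) (w : σ) (i : N.ι) (j : Fin (N.L i)) :
    N.G k (crnMon y s v) φ w i j = 0 ∨
    (∃ c : ℝ, N.G k (crnMon y s v) φ w i j
        = c * MvPolynomial.coeff (Finsupp.single y s) φ) ∨
    (1 ≤ s ∧ ((N.Y i = y ∧ N.S i (j : ℕ) = v) ∨ (N.Y i = v ∧ N.S i (j : ℕ) = y)) ∧
      ((∃ c' : ℝ, 0 < c' ∧ N.G k (crnMon y s v) φ w i j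
          = c' * MvPolynomial.coeff (crnMon y (s - 1) (N.U i ((j : ℕ) + 1))) φ) ∨
       (∃ c' : ℝ, 0 < c' ∧ N.G k (crnMon y s v) φ w i j
          = -c' * MvPolynomial.coeff (crnMon y (s - 1) v) φ))) := by
  have hUv : N.U i ((j : ℕ) + 1) ≠ v := fact_ne_of_nonint (inter_U N i j) hv
  have hUy : N.U i ((j : ℕ) + 1) ≠ y := fact_ne_of_nonint (inter_U N i j) hy
  have hl : ¬ (Finsupp.single (N.U i ((j : ℕ) + 1)) 1 ≤ crnMon y s v) := by
    intro h; rcases crn_lin_le h with h | h; exacts [hUy h, hUv h]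
  by_cases hq : (Finsupp.single (N.Y i) 1 + Finsupp.single (N.S i (j : ℕ)) 1 ≤ crnMon y s v)
  · obtain ⟨hpair, hs⟩ :=
      crn_quad_le (fact_Y_ne_S hp i (j : ℕ) (le_of_lt j.isLt)) hvy hq
    by_cases hw1 : w = N.U i ((j : ℕ) + 1)
    · subst hw1
      exact Or.inr (Or.inr ⟨hs, hpair, Or.inl ⟨k ⟨i, j, 0⟩, hk ⟨i, j, 0⟩,
        val_B_T4 h1 hy hv hvy hpair hs φ⟩⟩)
    by_cases hw3 : w = v
    · subst hw3
      exact Or.inr (Or.inr ⟨hs, hpair, Or.inr ⟨k ⟨i, j, 0⟩, hk ⟨i, j, 0⟩, by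
        rw [val_B_T3 hy hv hvy hpair hs φ]⟩⟩)
    by_cases hw2 : w = y
    · -- predecessor is the pure power y^s
      have hsub : crnMon y s v - (Finsupp.single (N.Y i) 1 + Finsupp.single (N.S i (j : ℕ)) 1)
          = Finsupp.single y (s - 1) := by
        rcases hpair with ⟨hY, hS⟩ | ⟨hY, hS⟩
        · rw [hY, hS]; exact crn_sub_quad hvy s
        · rw [hY, hS]; exact crn_sub_quad' hvy s
      have hpred : Finsupp.single y (s - 1) + Finsupp.single w 1 = Finsupp.single y s := by
        rw [hw2, crn_single_add_single, crnMon_self]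
        congr 1
        omega
      refine Or.inr (Or.inl ⟨k ⟨i, j, 0⟩ *
        (ind (N.U i ((j : ℕ) + 1)) w - ind (N.Y i) w - ind (N.S i (j : ℕ)) w) *
        (((Finsupp.single y (s - 1)) w : ℝ) + 1), ?_⟩)
      rw [G_eq, if_pos hq, if_neg hl, hsub, hpred]
      ring
    · -- w is none of the relevant species: the indicator factor vanishes
      left
      have hY : N.Y i ≠ w := by
        rcases hpair with ⟨hY, _⟩ | ⟨hY, _⟩
        · rw [hY]; exact fun h => hw2 h.symm
        · rw [hY]; exact fun h => hw3 h.symm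
      have hS : N.S i (j : ℕ) ≠ w := by
        rcases hpair with ⟨_, hS⟩ | ⟨_, hS⟩
        · rw [hS]; exact fun h => hw3 h.symm
        · rw [hS]; exact fun h => hw2 h.symm
      have hU : N.U i ((j : ℕ) + 1) ≠ w := fun h => hw1 h.symm
      rw [G_eq, if_pos hq, if_neg hl, ind_ne hY, ind_ne hS, ind_ne hU]
      ring
  · -- no contribution at all
    left
    rw [G_eq, if_neg hq, if_neg hl]
    ring

/-- Classification of the terms contributing to the coefficient of a monomial
`y^s·u'`, `u'` an intermediate. -/
lemma G_A_cases (h1 : N.Assumption1) (hp : N.IsPartition part) (hk : ∀ r, 0 < k r)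
    (hy : ¬ N.inter y) (i0 : N.ι) (j0 : Fin (N.L i0))
    (s : ℕ) (φ : MvPolynomial σ ℝ) (w : σ) (i : N.ι) (j : Fin (N.L i)) :
    N.G k (crnMon y s (N.U i0 ((j0 : ℕ) + 1))) φ w i j = 0 ∨
    (∃ c : ℝ, N.G k (crnMon y s (N.U i0 ((j0 : ℕ) + 1))) φ w i j
        = c * MvPolynomial.coeff (Finsupp.single y (s + 1)) φ) ∨
    (∃ c' : ℝ, 0 < c' ∧ N.G k (crnMon y s (N.U i0 ((j0 : ℕ) + 1))) φ w i j
        = -c' * MvPolynomial.coeff (crnMon y s (N.U i0 ((j0 : ℕ) + 1))) φ) ∨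
    (∃ w' : σ, ∃ c' : ℝ, 0 < c' ∧
      (w' = N.Y i0 ∨ w' = N.S i0 (j0 : ℕ) ∨ w' = N.S i0 ((j0 : ℕ) + 1)) ∧ w' ≠ y ∧
      N.G k (crnMon y s (N.U i0 ((j0 : ℕ) + 1))) φ w i j
        = c' * MvPolynomial.coeff (crnMon y s w') φ) := by
  have hu'y : N.U i0 ((j0 : ℕ) + 1) ≠ y := fact_ne_of_nonint (inter_U N i0 j0) hy
  have hq : ¬ (Finsupp.single (N.Y i) 1 + Finsupp.single (N.S i (j : ℕ)) 1
      ≤ crnMon y s (N.U i0 ((j0 : ℕ) + 1))) := by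
    intro h
    rcases (crn_quad_le (fact_Y_ne_S hp i (j : ℕ) (le_of_lt j.isLt)) hu'y h).1 with
      ⟨hY, hS⟩ | ⟨hY, hS⟩
    · exact h1.U_ne_S i0 j0 i (j : ℕ) (le_of_lt j.isLt) hS.symm
    · exact h1.U_ne_Y i0 j0 i hY.symm
  by_cases hlin : (Finsupp.single (N.U i ((j : ℕ) + 1)) 1
      ≤ crnMon y s (N.U i0 ((j0 : ℕ) + 1)))
  · -- the block must be the block of `u'`
    have hU : N.U i ((j : ℕ) + 1) = N.U i0 ((j0 : ℕ) + 1) := by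
      rcases crn_lin_le hlin with h | h
      · exact absurd h (fact_ne_of_nonint (inter_U N i j) hy)
      · exact h
    obtain ⟨hi, hj⟩ := h1.U_inj i j i0 j0 hU
    subst hi
    have : j = j0 := Fin.ext hj
    subst this
    by_cases hw1 : w = N.U i ((j : ℕ) + 1)
    · subst hw1
      exact Or.inr (Or.inr (Or.inl ⟨k ⟨i, j, 1⟩ + k ⟨i, j, 2⟩,
        by have := hk ⟨i, j, 1⟩; have := hk ⟨i, j, 2⟩; positivity, by
          rw [val_A_pers h1 hp hy s φ]⟩))
    by_cases hw2 : w = N.Y i ∨ w = N.S i (j : ℕ) ∨ w = N.S i ((j : ℕ) + 1)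
    · obtain ⟨c', hc', hval⟩ := val_A_in h1 hp hk hy hw2 s φ
      by_cases hwy : w = y
      · refine Or.inr (Or.inl ⟨c', ?_⟩)
        rw [hval, hwy, crnMon_self]
      · exact Or.inr (Or.inr (Or.inr ⟨w, c', hc', hw2, hwy, hval⟩))
    · -- irrelevant `w`
      left
      push_neg at hw2
      obtain ⟨hwY, hwS, hwS'⟩ := hw2
      rw [G_eq, if_neg hq, if_pos hlin,
        ind_ne (fun h => hwY h.symm : N.Y i ≠ w),
        ind_ne (fun h => hwS h.symm : N.S i (j : ℕ) ≠ w),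
        ind_ne (fun h => hwS' h.symm : N.S i ((j : ℕ) + 1) ≠ w),
        ind_ne (fun h => hw1 h.symm : N.U i ((j : ℕ) + 1) ≠ w)]
      ring
  · left
    rw [G_eq, if_neg hq, if_neg hlin]
    ring


end Class

section Sign

variable {N : A1Network σ} {k : N.Param → ℝ} {part : σ → ℕ} {y : σ}

/-- Sign and support bookkeeping for the coefficients of the relevant monomial shapes
in a polynomial of the derivative hierarchy. -/
def Pack (N : A1Network σ) (k : N.Param → ℝ) (y : σ) (φ : MvPolynomial σ ℝ) (τ : ℝ)
    (b e : ℕ) : Prop :=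
  (∀ s : ℕ, ∀ v : σ, v ≠ y → ¬ N.inter v →
      0 ≤ τ * MvPolynomial.coeff (crnMon y s v) φ) ∧
  (∀ s : ℕ, ∀ i0 : N.ι, ∀ j0 : Fin (N.L i0),
      0 ≤ -τ * MvPolynomial.coeff (crnMon y s (N.U i0 ((j0 : ℕ) + 1))) φ) ∧
  (∀ s : ℕ, MvPolynomial.coeff (Finsupp.single y s) φ = 0) ∧
  (∀ s : ℕ, ∀ v : σ, v ≠ y → ¬ N.inter v → b < s →
      MvPolynomial.coeff (crnMon y s v) φ = 0) ∧
  (∀ s : ℕ, ∀ i0 : N.ι, ∀ j0 : Fin (N.L i0), b < s + 1 - e →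
      MvPolynomial.coeff (crnMon y s (N.U i0 ((j0 : ℕ) + 1))) φ = 0)

lemma pm_pos {τ x : ℝ} (hτ : τ = 1 ∨ τ = -1) (hx : x ≠ 0) (h : 0 ≤ τ * x) : 0 < τ * x := by
  rcases hτ with rfl | rfl <;>
  · rcases (le_iff_eq_or_lt.mp h) with h' | h'
    · exfalso; apply hx; nlinarith [h'.symm]
    · exact h'

lemma sum3_nonneg {c : ℝ} {f : σ → (i : N.ι) → Fin (N.L i) → ℝ}
    (h : ∀ w i j, 0 ≤ c * f w i j) : 0 ≤ c * ∑ w, ∑ i, ∑ j, f w i j := by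
  rw [Finset.mul_sum]
  refine Finset.sum_nonneg fun w _ => ?_
  rw [Finset.mul_sum]
  refine Finset.sum_nonneg fun i _ => ?_
  rw [Finset.mul_sum]
  exact Finset.sum_nonneg fun j _ => h w i j

lemma sum3_pos {c : ℝ} {f : σ → (i : N.ι) → Fin (N.L i) → ℝ}
    (h : ∀ w i j, 0 ≤ c * f w i j) (w0 : σ) (i0 : N.ι) (j0 : Fin (N.L i0))
    (hpos : 0 < c * f w0 i0 j0) : 0 < c * ∑ w, ∑ i, ∑ j, f w i j := by
  rw [Finset.mul_sum]
  refine Finset.sum_pos' (fun w _ => ?_) ⟨w0, Finset.mem_univ _, ?_⟩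
  · rw [Finset.mul_sum]
    refine Finset.sum_nonneg fun i _ => ?_
    rw [Finset.mul_sum]
    exact Finset.sum_nonneg fun j _ => h w i j
  · rw [Finset.mul_sum]
    refine Finset.sum_pos' (fun i _ => ?_) ⟨i0, Finset.mem_univ _, ?_⟩
    · rw [Finset.mul_sum]
      exact Finset.sum_nonneg fun j _ => h w0 i j
    · rw [Finset.mul_sum]
      exact Finset.sum_pos' (fun j _ => h w0 i0 j) ⟨j0, Finset.mem_univ _, hpos⟩

lemma sum3_ne {f : σ → (i : N.ι) → Fin (N.L i) → ℝ}
    (h : (∑ w, ∑ i, ∑ j, f w i j) ≠ 0) : ∃ w i j, f w i j ≠ 0 := by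
  by_contra hc
  push_neg at hc
  exact h (Finset.sum_eq_zero fun w _ => Finset.sum_eq_zero fun i _ =>
    Finset.sum_eq_zero fun j _ => hc w i j)

lemma ne_of_pos_mul {c x : ℝ} (h : 0 < c * x) : x ≠ 0 := by
  intro h0; rw [h0, mul_zero] at h; exact lt_irrefl 0 h

lemma termB_nonneg (h1 : N.Assumption1) (hp : N.IsPartition part) (hk : ∀ r, 0 < k r)
    (hy : ¬ N.inter y) {v : σ} (hv : ¬ N.inter v) (hvy : v ≠ y)
    {φ : MvPolynomial σ ℝ} {τ : ℝ} {b e : ℕ} (hP : Pack N k y φ τ b e)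
    (s : ℕ) (w : σ) (i : N.ι) (j : Fin (N.L i)) :
    0 ≤ -τ * N.G k (crnMon y s v) φ w i j := by
  rcases G_B_cases h1 hp hk hy hv hvy s φ w i j with h0 | ⟨c, hc⟩ | ⟨hs, hpair, hcase⟩
  · rw [h0, mul_zero]
  · rw [hc, hP.2.2.1 s, mul_zero, mul_zero]
  · rcases hcase with ⟨c', hc', heq⟩ | ⟨c', hc', heq⟩
    · rw [heq]
      nlinarith [mul_nonneg hc'.le (hP.2.1 (s - 1) i j)]
    · rw [heq]
      nlinarith [mul_nonneg hc'.le (hP.1 (s - 1) v hvy hv)]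

lemma termA_nonneg (h1 : N.Assumption1) (hp : N.IsPartition part) (hk : ∀ r, 0 < k r)
    (hy : ¬ N.inter y) (i0 : N.ι) (j0 : Fin (N.L i0))
    {φ : MvPolynomial σ ℝ} {τ : ℝ} {b e : ℕ} (hP : Pack N k y φ τ b e)
    (s : ℕ) (w : σ) (i : N.ι) (j : Fin (N.L i)) :
    0 ≤ τ * N.G k (crnMon y s (N.U i0 ((j0 : ℕ) + 1))) φ w i j := by
  rcases G_A_cases h1 hp hk hy i0 j0 s φ w i j with
    h0 | ⟨c, hc⟩ | ⟨c', hc', heq⟩ | ⟨w', c', hc', hmem, hw'y, heq⟩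
  · rw [h0, mul_zero]
  · rw [hc, hP.2.2.1 (s + 1), mul_zero, mul_zero]
  · rw [heq]
    nlinarith [mul_nonneg hc'.le (hP.2.1 s i0 j0)]
  · have hw'ni : ¬ N.inter w' := by
      rcases hmem with h | h | h
      · rw [h]; exact fact_nonint_Y hp i0
      · rw [h]; exact fact_nonint_S hp i0 (j0 : ℕ) (le_of_lt j0.isLt)
      · rw [h]; exact fact_nonint_S hp i0 ((j0 : ℕ) + 1) j0.isLt
    rw [heq]
    nlinarith [mul_nonneg hc'.le (hP.1 s w' hw'y hw'ni)]

lemma termB_zero (h1 : N.Assumption1) (hp : N.IsPartition part) (hk : ∀ r, 0 < k r)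
    (hy : ¬ N.inter y) {v : σ} (hv : ¬ N.inter v) (hvy : v ≠ y)
    {φ : MvPolynomial σ ℝ} {τ : ℝ} {b e : ℕ} (he : e ≤ 1) (hP : Pack N k y φ τ b e)
    {s : ℕ} (hb : b + 1 < s) (w : σ) (i : N.ι) (j : Fin (N.L i)) :
    N.G k (crnMon y s v) φ w i j = 0 := by
  rcases G_B_cases h1 hp hk hy hv hvy s φ w i j with h0 | ⟨c, hc⟩ | ⟨hs, hpair, hcase⟩
  · exact h0
  · rw [hc, hP.2.2.1 s, mul_zero]
  · rcases hcase with ⟨c', hc', heq⟩ | ⟨c', hc', heq⟩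
    · rw [heq, hP.2.2.2.2 (s - 1) i j (by omega), mul_zero]
    · rw [heq, hP.2.2.2.1 (s - 1) v hvy hv (by omega), mul_zero]

lemma termA_zero (h1 : N.Assumption1) (hp : N.IsPartition part) (hk : ∀ r, 0 < k r)
    (hy : ¬ N.inter y) (i0 : N.ι) (j0 : Fin (N.L i0))
    {φ : MvPolynomial σ ℝ} {τ : ℝ} {b e : ℕ} (he : e ≤ 1) (hP : Pack N k y φ τ b e)
    {s : ℕ} (hb : b + 1 < s + 1 - e) (w : σ) (i : N.ι) (j : Fin (N.L i)) :
    N.G k (crnMon y s (N.U i0 ((j0 : ℕ) + 1))) φ w i j = 0 := by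
  rcases G_A_cases h1 hp hk hy i0 j0 s φ w i j with
    h0 | ⟨c, hc⟩ | ⟨c', hc', heq⟩ | ⟨w', c', hc', hmem, hw'y, heq⟩
  · exact h0
  · rw [hc, hP.2.2.1 (s + 1), mul_zero]
  · rw [heq, hP.2.2.2.2 s i0 j0 (by omega), mul_zero]
  · have hw'ni : ¬ N.inter w' := by
      rcases hmem with h | h | h
      · rw [h]; exact fact_nonint_Y hp i0
      · rw [h]; exact fact_nonint_S hp i0 (j0 : ℕ) (le_of_lt j0.isLt)
      · rw [h]; exact fact_nonint_S hp i0 ((j0 : ℕ) + 1) j0.isLt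
    rw [heq, hP.2.2.2.1 s w' hw'y hw'ni (by omega), mul_zero]

lemma StepPack (h1 : N.Assumption1) (hp : N.IsPartition part) (hk : ∀ r, 0 < k r)
    (hy : ¬ N.inter y) {φ : MvPolynomial σ ℝ} {τ : ℝ} {b e : ℕ} (he : e ≤ 1)
    (hP : Pack N k y φ τ b e) :
    Pack N k y (lieD (N.rhs k) φ) (-τ) (b + 1) e := by
  refine ⟨?_, ?_, ?_, ?_, ?_⟩
  · intro s v hvy hv
    rw [coeff_lieD]
    exact sum3_nonneg fun w i j => termB_nonneg h1 hp hk hy hv hvy hP s w i j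
  · intro s i0 j0
    rw [neg_neg, coeff_lieD]
    exact sum3_nonneg fun w i j => termA_nonneg h1 hp hk hy i0 j0 hP s w i j
  · intro s
    exact coeff_lieD_pure h1 hp hy s φ
  · intro s v hvy hv hb
    rw [coeff_lieD]
    exact Finset.sum_eq_zero fun w _ => Finset.sum_eq_zero fun i _ =>
      Finset.sum_eq_zero fun j _ => termB_zero h1 hp hk hy hv hvy he hP hb w i j
  · intro s i0 j0 hb
    rw [coeff_lieD]
    exact Finset.sum_eq_zero fun w _ => Finset.sum_eq_zero fun i _ =>
      Finset.sum_eq_zero fun j _ => termA_zero h1 hp hk hy i0 j0 he hP hb w i j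

lemma deriv_succ (z : σ) (p : ℕ) :
    N.deriv k (p + 1) z = lieD (N.rhs k) (N.deriv k p z) := rfl

lemma pack_deriv_nonint (h1 : N.Assumption1) (hp : N.IsPartition part)
    (hk : ∀ r, 0 < k r) (hy : ¬ N.inter y) {z : σ} (hz : ¬ N.inter z) (hzy : z ≠ y)
    (hyz : y ≠ z) : ∀ p, Pack N k y (N.deriv k p z) ((-1) ^ p) p 0 := by
  intro p
  induction p with
  | zero =>
    refine ⟨?_, ?_, ?_, ?_, ?_⟩
    · intro s v hvy hv
      rw [pow_zero, one_mul]
      show 0 ≤ MvPolynomial.coeff _ (X z)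
      rw [MvPolynomial.coeff_X']
      split_ifs <;> norm_num
    · intro s i0 j0
      show 0 ≤ _ * MvPolynomial.coeff _ (X z)
      rw [MvPolynomial.coeff_X', if_neg, mul_zero]
      intro h
      obtain ⟨-, h2⟩ := crn_mon_eq_single
        (fact_ne_of_nonint (inter_U N i0 j0) hy) hyz h.symm
      exact hz (h2 ▸ inter_U N i0 j0)
    · intro s
      show MvPolynomial.coeff _ (X z) = 0
      rw [MvPolynomial.coeff_X', if_neg]
      exact fun h => crn_pure_ne_single hyz s h.symm
    · intro s v hvy hv hb
      show MvPolynomial.coeff _ (X z) = 0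
      rw [MvPolynomial.coeff_X', if_neg]
      intro h
      obtain ⟨h1', -⟩ := crn_mon_eq_single hvy hyz h.symm
      omega
    · intro s i0 j0 hb
      show MvPolynomial.coeff _ (X z) = 0
      rw [MvPolynomial.coeff_X', if_neg]
      intro h
      obtain ⟨-, h2⟩ := crn_mon_eq_single
        (fact_ne_of_nonint (inter_U N i0 j0) hy) hyz h.symm
      exact hz (h2 ▸ inter_U N i0 j0)
  | succ p ih =>
    have h := StepPack h1 hp hk hy (Nat.zero_le 1) ih
    rw [deriv_succ]
    have hτ : ((-1 : ℝ)) ^ (p + 1) = -((-1 : ℝ) ^ p) := by ring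
    rw [hτ]
    exact h


lemma pack_deriv_inter (h1 : N.Assumption1) (hp : N.IsPartition part)
    (hk : ∀ r, 0 < k r) (hy : ¬ N.inter y) {z : σ} (hz : N.inter z) :
    ∀ p, Pack N k y (N.deriv k p z) (-((-1) ^ p)) p 1 := by
  have hzy : z ≠ y := fact_ne_of_nonint hz hy
  have hyz : y ≠ z := hzy.symm
  intro p
  induction p with
  | zero =>
    refine ⟨?_, ?_, ?_, ?_, ?_⟩
    · intro s v hvy hv
      show 0 ≤ _ * MvPolynomial.coeff _ (X z)
      rw [MvPolynomial.coeff_X', if_neg, mul_zero]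
      intro h
      obtain ⟨-, h2⟩ := crn_mon_eq_single hvy hyz h.symm
      exact hv (h2 ▸ hz)
    · intro s i0 j0
      rw [pow_zero, neg_neg, one_mul]
      show 0 ≤ MvPolynomial.coeff _ (X z)
      rw [MvPolynomial.coeff_X']
      split_ifs <;> norm_num
    · intro s
      show MvPolynomial.coeff _ (X z) = 0
      rw [MvPolynomial.coeff_X', if_neg]
      exact fun h => crn_pure_ne_single hyz s h.symm
    · intro s v hvy hv hb
      show MvPolynomial.coeff _ (X z) = 0
      rw [MvPolynomial.coeff_X', if_neg]
      intro h
      obtain ⟨-, h2⟩ := crn_mon_eq_single hvy hyz h.symm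
      exact hv (h2 ▸ hz)
    · intro s i0 j0 hb
      show MvPolynomial.coeff _ (X z) = 0
      rw [MvPolynomial.coeff_X', if_neg]
      intro h
      obtain ⟨h1', -⟩ := crn_mon_eq_single
        (fact_ne_of_nonint (inter_U N i0 j0) hy) hyz h.symm
      omega
  | succ p ih =>
    have h := StepPack h1 hp hk hy (le_refl 1) ih
    rw [deriv_succ]
    have hτ : -((-1 : ℝ)) ^ (p + 1) = -(-((-1 : ℝ) ^ p)) := by ring
    rw [hτ]
    exact h

-- ======= forward lemmas =======

lemma forward_T1 (h1 : N.Assumption1) (hp : N.IsPartition part) (hk : ∀ r, 0 < k r)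
    (hy : ¬ N.inter y) {φ : MvPolynomial σ ℝ} {τ : ℝ} {b e : ℕ}
    (hτ : τ = 1 ∨ τ = -1) (hP : Pack N k y φ τ b e) (i0 : N.ι) (j0 : Fin (N.L i0))
    (s : ℕ) (hne : MvPolynomial.coeff (crnMon y s (N.U i0 ((j0 : ℕ) + 1))) φ ≠ 0) :
    MvPolynomial.coeff (crnMon y s (N.U i0 ((j0 : ℕ) + 1))) (lieD (N.rhs k) φ) ≠ 0 := by
  have hall := termA_nonneg h1 hp hk hy i0 j0 hP (φ := φ) s
  have hstrict : 0 < -τ * MvPolynomial.coeff (crnMon y s (N.U i0 ((j0 : ℕ) + 1))) φ := by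
    refine pm_pos ?_ hne (hP.2.1 s i0 j0)
    rcases hτ with rfl | rfl
    · right; norm_num
    · left; norm_num
  have hterm : 0 < τ * N.G k (crnMon y s (N.U i0 ((j0 : ℕ) + 1))) φ
      (N.U i0 ((j0 : ℕ) + 1)) i0 j0 := by
    rw [val_A_pers h1 hp hy s φ]
    have hkk : 0 < k ⟨i0, j0, 1⟩ + k ⟨i0, j0, 2⟩ := by
      have := hk ⟨i0, j0, 1⟩; have := hk ⟨i0, j0, 2⟩; linarith
    nlinarith
  have := sum3_pos hall _ i0 j0 hterm
  rw [← coeff_lieD] at this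
  intro h0
  rw [h0, mul_zero] at this
  exact lt_irrefl 0 this

lemma forward_T2 (h1 : N.Assumption1) (hp : N.IsPartition part) (hk : ∀ r, 0 < k r)
    (hy : ¬ N.inter y) {φ : MvPolynomial σ ℝ} {τ : ℝ} {b e : ℕ}
    (hτ : τ = 1 ∨ τ = -1) (hP : Pack N k y φ τ b e) (i0 : N.ι) (j0 : Fin (N.L i0))
    {w' : σ} (hmem : w' = N.Y i0 ∨ w' = N.S i0 (j0 : ℕ) ∨ w' = N.S i0 ((j0 : ℕ) + 1))
    (hw'y : w' ≠ y)
    (s : ℕ) (hne : MvPolynomial.coeff (crnMon y s w') φ ≠ 0) :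
    MvPolynomial.coeff (crnMon y s (N.U i0 ((j0 : ℕ) + 1))) (lieD (N.rhs k) φ) ≠ 0 := by
  have hw'ni : ¬ N.inter w' := by
    rcases hmem with h | h | h
    · rw [h]; exact fact_nonint_Y hp i0
    · rw [h]; exact fact_nonint_S hp i0 (j0 : ℕ) (le_of_lt j0.isLt)
    · rw [h]; exact fact_nonint_S hp i0 ((j0 : ℕ) + 1) j0.isLt
  have hall := termA_nonneg h1 hp hk hy i0 j0 hP (φ := φ) s
  have hstrict : 0 < τ * MvPolynomial.coeff (crnMon y s w') φ :=
    pm_pos hτ hne (hP.1 s w' hw'y hw'ni)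
  obtain ⟨c', hc', hval⟩ := val_A_in h1 hp hk hy hmem s φ
  have hterm : 0 < τ * N.G k (crnMon y s (N.U i0 ((j0 : ℕ) + 1))) φ w' i0 j0 := by
    rw [hval]
    nlinarith
  have := sum3_pos hall _ i0 j0 hterm
  rw [← coeff_lieD] at this
  intro h0
  rw [h0, mul_zero] at this
  exact lt_irrefl 0 this

lemma forward_T3 (h1 : N.Assumption1) (hp : N.IsPartition part) (hk : ∀ r, 0 < k r)
    (hy : ¬ N.inter y) {φ : MvPolynomial σ ℝ} {τ : ℝ} {b e : ℕ}
    (hτ : τ = 1 ∨ τ = -1) (hP : Pack N k y φ τ b e) {v : σ} (hv : ¬ N.inter v)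
    (hvy : v ≠ y) {i : N.ι} {j : Fin (N.L i)}
    (hpair : (N.Y i = y ∧ N.S i (j : ℕ) = v) ∨ (N.Y i = v ∧ N.S i (j : ℕ) = y))
    {s : ℕ} (hs : 1 ≤ s) (hne : MvPolynomial.coeff (crnMon y (s - 1) v) φ ≠ 0) :
    MvPolynomial.coeff (crnMon y s v) (lieD (N.rhs k) φ) ≠ 0 := by
  have hall := termB_nonneg h1 hp hk hy hv hvy hP (φ := φ) s
  have hstrict : 0 < τ * MvPolynomial.coeff (crnMon y (s - 1) v) φ :=
    pm_pos hτ hne (hP.1 (s - 1) v hvy hv)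
  have hterm : 0 < -τ * N.G k (crnMon y s v) φ v i j := by
    rw [val_B_T3 hy hv hvy hpair hs φ]
    have := hk ⟨i, j, 0⟩
    nlinarith
  have := sum3_pos hall _ i j hterm
  rw [← coeff_lieD] at this
  intro h0
  rw [h0, mul_zero] at this
  exact lt_irrefl 0 this

lemma forward_T4 (h1 : N.Assumption1) (hp : N.IsPartition part) (hk : ∀ r, 0 < k r)
    (hy : ¬ N.inter y) {φ : MvPolynomial σ ℝ} {τ : ℝ} {b e : ℕ}
    (hτ : τ = 1 ∨ τ = -1) (hP : Pack N k y φ τ b e) {v : σ} (hv : ¬ N.inter v)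
    (hvy : v ≠ y) {i : N.ι} {j : Fin (N.L i)}
    (hpair : (N.Y i = y ∧ N.S i (j : ℕ) = v) ∨ (N.Y i = v ∧ N.S i (j : ℕ) = y))
    {s : ℕ} (hs : 1 ≤ s)
    (hne : MvPolynomial.coeff (crnMon y (s - 1) (N.U i ((j : ℕ) + 1))) φ ≠ 0) :
    MvPolynomial.coeff (crnMon y s v) (lieD (N.rhs k) φ) ≠ 0 := by
  have hall := termB_nonneg h1 hp hk hy hv hvy hP (φ := φ) s
  have hτ' : -τ = 1 ∨ -τ = -1 := by
    rcases hτ with rfl | rfl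
    · right; norm_num
    · left; norm_num
  have hstrict : 0 < -τ * MvPolynomial.coeff (crnMon y (s - 1) (N.U i ((j : ℕ) + 1))) φ :=
    pm_pos hτ' hne (hP.2.1 (s - 1) i j)
  have hterm : 0 < -τ * N.G k (crnMon y s v) φ (N.U i ((j : ℕ) + 1)) i j := by
    rw [val_B_T4 h1 hy hv hvy hpair hs φ]
    have := hk ⟨i, j, 0⟩
    nlinarith
  have := sum3_pos hall _ i j hterm
  rw [← coeff_lieD] at this
  intro h0
  rw [h0, mul_zero] at this
  exact lt_irrefl 0 this

-- ======= backward lemmas =======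

lemma backward_B (h1 : N.Assumption1) (hp : N.IsPartition part) (hk : ∀ r, 0 < k r)
    (hy : ¬ N.inter y) {v : σ} (hv : ¬ N.inter v) (hvy : v ≠ y)
    {φ : MvPolynomial σ ℝ} (hSP : ∀ t, MvPolynomial.coeff (Finsupp.single y t) φ = 0)
    {s : ℕ} (hne : MvPolynomial.coeff (crnMon y s v) (lieD (N.rhs k) φ) ≠ 0) :
    ∃ i : N.ι, ∃ j : Fin (N.L i), 1 ≤ s ∧
      ((N.Y i = y ∧ N.S i (j : ℕ) = v) ∨ (N.Y i = v ∧ N.S i (j : ℕ) = y)) ∧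
      (MvPolynomial.coeff (crnMon y (s - 1) (N.U i ((j : ℕ) + 1))) φ ≠ 0 ∨
       MvPolynomial.coeff (crnMon y (s - 1) v) φ ≠ 0) := by
  rw [coeff_lieD] at hne
  obtain ⟨w, i, j, hG⟩ := sum3_ne hne
  rcases G_B_cases h1 hp hk hy hv hvy s φ w i j with h0 | ⟨c, hc⟩ | ⟨hs, hpair, hcase⟩
  · exact absurd h0 hG
  · rw [hc, hSP s, mul_zero] at hG
    exact absurd rfl hG
  · refine ⟨i, j, hs, hpair, ?_⟩
    rcases hcase with ⟨c', hc', heq⟩ | ⟨c', hc', heq⟩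
    · left
      intro h0
      rw [heq, h0, mul_zero] at hG
      exact hG rfl
    · right
      intro h0
      rw [heq, h0, mul_zero] at hG
      exact hG rfl

lemma backward_A (h1 : N.Assumption1) (hp : N.IsPartition part) (hk : ∀ r, 0 < k r)
    (hy : ¬ N.inter y) (i0 : N.ι) (j0 : Fin (N.L i0))
    {φ : MvPolynomial σ ℝ} (hSP : ∀ t, MvPolynomial.coeff (Finsupp.single y t) φ = 0)
    {s : ℕ}
    (hne : MvPolynomial.coeff (crnMon y s (N.U i0 ((j0 : ℕ) + 1))) (lieD (N.rhs k) φ) ≠ 0) :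
    MvPolynomial.coeff (crnMon y s (N.U i0 ((j0 : ℕ) + 1))) φ ≠ 0 ∨
    (∃ w' : σ, (w' = N.Y i0 ∨ w' = N.S i0 (j0 : ℕ) ∨ w' = N.S i0 ((j0 : ℕ) + 1)) ∧
      w' ≠ y ∧ MvPolynomial.coeff (crnMon y s w') φ ≠ 0) := by
  rw [coeff_lieD] at hne
  obtain ⟨w, i, j, hG⟩ := sum3_ne hne
  rcases G_A_cases h1 hp hk hy i0 j0 s φ w i j with
    h0 | ⟨c, hc⟩ | ⟨c', hc', heq⟩ | ⟨w', c', hc', hmem, hw'y, heq⟩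
  · exact absurd h0 hG
  · rw [hc, hSP (s + 1), mul_zero] at hG
    exact absurd rfl hG
  · left
    intro h0
    rw [heq, h0, mul_zero] at hG
    exact hG rfl
  · right
    refine ⟨w', hmem, hw'y, ?_⟩
    intro h0
    rw [heq, h0, mul_zero] at hG
    exact hG rfl




end Sign

section Mid

variable {N : A1Network σ} {k : N.Param → ℝ} {part : σ → ℕ} {y : σ}

lemma neg_one_pow_pm (p : ℕ) : ((-1 : ℝ)) ^ p = 1 ∨ ((-1 : ℝ)) ^ p = -1 :=
  neg_one_pow_eq_or ℝ p

/-- Cross-stream lifting: if a monomial of one of the two tracked shapes appears in the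
`p`-th derivative of `vcur`, where `{y, vcur}` is the reactant complex of a block with
intermediate `W`, and `vnext` is adjacent to `W`, then the same monomial multiplied by
`y` appears in the `(p+2)`-th derivative of `vnext`. -/
lemma lift (h1 : N.Assumption1) (hp : N.IsPartition part) (hk : ∀ r, 0 < k r)
    (hy : ¬ N.inter y) {vcur vnext : σ} (hvc : ¬ N.inter vcur) (hvcy : vcur ≠ y)
    (hvn : ¬ N.inter vnext) (hvny : vnext ≠ y)
    {i1 : N.ι} {j1 : Fin (N.L i1)}
    (hpair : (N.Y i1 = y ∧ N.S i1 (j1 : ℕ) = vcur) ∨ (N.Y i1 = vcur ∧ N.S i1 (j1 : ℕ) = y))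
    (hmem : vnext = N.Y i1 ∨ vnext = N.S i1 (j1 : ℕ) ∨ vnext = N.S i1 ((j1 : ℕ) + 1)) :
    ∀ p : ℕ,
      (∀ s : ℕ, ∀ v'' : σ, ¬ N.inter v'' → v'' ≠ y →
        MvPolynomial.coeff (crnMon y s v'') (N.deriv k p vcur) ≠ 0 →
        MvPolynomial.coeff (crnMon y (s + 1) v'') (N.deriv k (p + 2) vnext) ≠ 0) ∧
      (∀ s : ℕ, ∀ i0 : N.ι, ∀ j0 : Fin (N.L i0),
        MvPolynomial.coeff (crnMon y s (N.U i0 ((j0 : ℕ) + 1))) (N.deriv k p vcur) ≠ 0 →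
        MvPolynomial.coeff (crnMon y (s + 1) (N.U i0 ((j0 : ℕ) + 1)))
          (N.deriv k (p + 2) vnext) ≠ 0) := by
  have hyvc : y ≠ vcur := hvcy.symm
  have hyvn : y ≠ vnext := hvny.symm
  have packC : ∀ p : ℕ, Pack N k y (N.deriv k p vcur) ((-1) ^ p) p 0 :=
    pack_deriv_nonint h1 hp hk hy hvc hvcy hyvc
  have packN : ∀ p : ℕ, Pack N k y (N.deriv k p vnext) ((-1) ^ p) p 0 :=
    pack_deriv_nonint h1 hp hk hy hvn hvny hyvn
  intro p
  induction p with
  | zero =>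
    constructor
    · intro s v'' hv'' hv''y hne
      -- at step 0 the monomial must be `vcur` itself
      have : crnMon y s v'' = Finsupp.single vcur 1 := by
        by_contra hc
        apply hne
        show MvPolynomial.coeff _ (X vcur) = 0
        rw [MvPolynomial.coeff_X', if_neg fun h => hc h.symm]
      obtain ⟨hs0, hveq⟩ := crn_mon_eq_single hv''y hyvc this
      subst hs0
      -- build: vnext⁰ ∋ vnext, vnext¹ ∋ W, vnext² ∋ y·vcur
      have h0 : MvPolynomial.coeff (crnMon y 0 vnext) (N.deriv k 0 vnext) ≠ 0 := by
        rw [crn_mon_eq_single']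
        show MvPolynomial.coeff _ (X vnext) ≠ 0
        rw [MvPolynomial.coeff_X', if_pos rfl]
        norm_num
      have h1' : MvPolynomial.coeff (crnMon y 0 (N.U i1 ((j1 : ℕ) + 1)))
          (N.deriv k 1 vnext) ≠ 0 := by
        rw [show (1 : ℕ) = 0 + 1 from rfl, deriv_succ]
        exact forward_T2 h1 hp hk hy (neg_one_pow_pm 0) (packN 0) i1 j1 hmem hvny 0 h0
      have h2' : MvPolynomial.coeff (crnMon y 1 vcur) (N.deriv k 2 vnext) ≠ 0 := by
        rw [show (2 : ℕ) = 1 + 1 from rfl, deriv_succ]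
        exact forward_T4 h1 hp hk hy (neg_one_pow_pm 1) (packN 1) hvc hvcy hpair
          (le_refl 1) h1'
      rw [hveq]
      exact h2'
    · intro s i0 j0 hne
      exfalso
      apply hne
      show MvPolynomial.coeff _ (X vcur) = 0
      rw [MvPolynomial.coeff_X', if_neg]
      intro h
      obtain ⟨-, h2⟩ := crn_mon_eq_single
        (fact_ne_of_nonint (inter_U N i0 j0) hy) hyvc h.symm
      exact hvc (h2 ▸ inter_U N i0 j0)
  | succ p IH =>
    constructor
    · intro s v'' hv'' hv''y hne
      rw [deriv_succ] at hne
      obtain ⟨i, j, hs, hpair', hpred⟩ :=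
        backward_B h1 hp hk hy hv'' hv''y (fun t => (packC p).2.2.1 t) hne
      rcases hpred with hpred | hpred
      · -- A predecessor
        have := IH.2 (s - 1) i j hpred
        have hres := forward_T4 h1 hp hk hy (neg_one_pow_pm (p + 2)) (packN (p + 2))
          hv'' hv''y hpair' (show 1 ≤ s + 1 by omega)
          (by rwa [show s + 1 - 1 = (s - 1) + 1 by omega])
        rw [← deriv_succ] at hres
        rwa [show p + 1 + 2 = p + 2 + 1 by omega]
      · -- B predecessor
        have := IH.1 (s - 1) v'' hv'' hv''y hpred
        have hres := forward_T3 h1 hp hk hy (neg_one_pow_pm (p + 2)) (packN (p + 2))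
          hv'' hv''y hpair' (show 1 ≤ s + 1 by omega)
          (by rwa [show s + 1 - 1 = (s - 1) + 1 by omega])
        rw [← deriv_succ] at hres
        rwa [show p + 1 + 2 = p + 2 + 1 by omega]
    · intro s i0 j0 hne
      rw [deriv_succ] at hne
      rcases backward_A h1 hp hk hy i0 j0 (fun t => (packC p).2.2.1 t) hne with
        hpred | ⟨w', hmem', hw'y, hpred⟩
      · have := IH.2 s i0 j0 hpred
        have hres := forward_T1 h1 hp hk hy (neg_one_pow_pm (p + 2)) (packN (p + 2))
          i0 j0 (s + 1) this
        rw [← deriv_succ] at hres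
        rwa [show p + 1 + 2 = p + 2 + 1 by omega]
      · have hw'ni : ¬ N.inter w' := by
          rcases hmem' with h | h | h
          · rw [h]; exact fact_nonint_Y hp i0
          · rw [h]; exact fact_nonint_S hp i0 (j0 : ℕ) (le_of_lt j0.isLt)
          · rw [h]; exact fact_nonint_S hp i0 ((j0 : ℕ) + 1) j0.isLt
        have := IH.1 s w' hw'ni hw'y hpred
        have hres := forward_T2 h1 hp hk hy (neg_one_pow_pm (p + 2)) (packN (p + 2))
          i0 j0 hmem' hw'y (s + 1) this
        rw [← deriv_succ] at hres
        rwa [show p + 1 + 2 = p + 2 + 1 by omega]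

/-- `z`'s derivative stream dominates a `d`-fold `y`-lifted copy of `v`'s stream, for
monomials `y^c·u`. -/
def Link (N : A1Network σ) (k : N.Param → ℝ) (y u : σ) (z v : σ) (d : ℕ) : Prop :=
  ∀ c p : ℕ, MvPolynomial.coeff (crnMon y c u) (N.deriv k p v) ≠ 0 →
    MvPolynomial.coeff (crnMon y (c + d) u) (N.deriv k (p + 2 * d) z) ≠ 0

lemma Link_refl (u z : σ) : Link N k y u z z 0 := by
  intro c p h
  simpa using h

lemma Link_comp {u z v v' : σ} {d : ℕ} (hzv' : Link N k y u z v' d)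
    (hstep : ∀ c p : ℕ, MvPolynomial.coeff (crnMon y c u) (N.deriv k p v) ≠ 0 →
      MvPolynomial.coeff (crnMon y (c + 1) u) (N.deriv k (p + 2) v') ≠ 0) :
    Link N k y u z v (d + 1) := by
  intro c p h
  have := hzv' (c + 1) (p + 2) (hstep c p h)
  rwa [show c + 1 + d = c + (d + 1) by omega, show p + 2 + 2 * d = p + 2 * (d + 1) by omega]
    at this

/-- The pump: `y^c·v₁` appears in `v₁^{(c)}` whenever a block with reactant complex
`{y, v₁}` exists. -/
lemma pump (h1 : N.Assumption1) (hp : N.IsPartition part) (hk : ∀ r, 0 < k r)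
    (hy : ¬ N.inter y) {v1 : σ} (hv1 : ¬ N.inter v1) (hv1y : v1 ≠ y)
    {i1 : N.ι} {j1 : Fin (N.L i1)}
    (hpair : (N.Y i1 = y ∧ N.S i1 (j1 : ℕ) = v1) ∨ (N.Y i1 = v1 ∧ N.S i1 (j1 : ℕ) = y)) :
    ∀ c : ℕ, MvPolynomial.coeff (crnMon y c v1) (N.deriv k c v1) ≠ 0 := by
  have packV : ∀ p : ℕ, Pack N k y (N.deriv k p v1) ((-1) ^ p) p 0 :=
    pack_deriv_nonint h1 hp hk hy hv1 hv1y hv1y.symm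
  intro c
  induction c with
  | zero =>
    rw [crn_mon_eq_single']
    show MvPolynomial.coeff _ (X v1) ≠ 0
    rw [MvPolynomial.coeff_X', if_pos rfl]
    norm_num
  | succ c ih =>
    rw [deriv_succ]
    exact forward_T3 h1 hp hk hy (neg_one_pow_pm c) (packV c) hv1 hv1y hpair
      (show 1 ≤ c + 1 by omega) (by rwa [show c + 1 - 1 = c by omega])



lemma enzyme_id (h1 : N.Assumption1) (hp : N.IsPartition part) {iu : N.ι} {v : σ}
    (hyY : y = N.Y iu) {jv : ℕ} (hjv : jv ≤ N.L iu) (hveq : v = N.S iu jv)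
    {i : N.ι} {j : Fin (N.L i)}
    (hpair : (N.Y i = y ∧ N.S i (j : ℕ) = v) ∨ (N.Y i = v ∧ N.S i (j : ℕ) = y)) :
    i = iu ∧ y = N.Y i := by
  rcases hpair with ⟨hY, hS⟩ | ⟨hY, hS⟩
  · have hcomp : ∀ t, ind (N.Y i) t + ind (N.S i (j : ℕ)) t
        = ind (N.Y iu) t + ind (N.S iu jv) t := by
      intro t; rw [hY, hS, hyY, hveq]
    exact ⟨h1.complex_unique i iu (j : ℕ) jv (le_of_lt j.isLt) hjv hcomp, hY.symm⟩
  · have hcomp : ∀ t, ind (N.Y i) t + ind (N.S i (j : ℕ)) t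
        = ind (N.Y iu) t + ind (N.S iu jv) t := by
      intro t; rw [hY, hS, hyY, hveq]; ring
    have hieq := h1.complex_unique i iu (j : ℕ) jv (le_of_lt j.isLt) hjv hcomp
    exfalso
    apply fact_Y_ne_S hp i jv (hieq ▸ hjv)
    rw [hY, hveq, hieq]

end Mid

section Main

variable (N : A1Network σ) (k : N.Param → ℝ) (y x : σ) (iu : N.ι) (ju : Fin (N.L iu))

/-- Backward-chain statement for monomials `y^s·v`. -/
def StmtB (q : ℕ) : Prop :=
  ∀ s : ℕ, ∀ v : σ, ¬ N.inter v → v ≠ y → v ≠ x →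
    MvPolynomial.coeff (crnMon y s v) (N.deriv k q x) ≠ 0 →
    ∃ i : N.ι, ∃ j : Fin (N.L i), ∃ zw : σ, ∃ d : ℕ,
      ¬ N.inter zw ∧ zw ≠ x ∧ zw ≠ y ∧
      ((y = N.Y i ∧ zw = N.S i (j : ℕ)) ∨ (y = N.S i (j : ℕ) ∧ zw = N.Y i)) ∧
      x = N.S i ((j : ℕ) + 1) ∧
      d + 1 ≤ s ∧ s + d + 1 ≤ q ∧
      Link N k y (N.U iu ((ju : ℕ) + 1)) zw v d ∧
      (∃ i₁ : N.ι, ∃ j₁ : Fin (N.L i₁),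
        (N.Y i₁ = y ∧ N.S i₁ (j₁ : ℕ) = v) ∨ (N.Y i₁ = v ∧ N.S i₁ (j₁ : ℕ) = y)) ∧
      ((y = N.Y iu ∧ ∃ jv, jv ≤ N.L iu ∧ v = N.S iu jv) → (i = iu ∧ y = N.Y i))

/-- Backward-chain statement for monomials `y^s·W`, `W` the intermediate of a block
with reactant complex `{y, v}`. -/
def StmtBA (q : ℕ) : Prop :=
  ∀ s : ℕ, ∀ i : N.ι, ∀ j : Fin (N.L i), ∀ v : σ, ¬ N.inter v → v ≠ y → v ≠ x →
    ((N.Y i = y ∧ N.S i (j : ℕ) = v) ∨ (N.Y i = v ∧ N.S i (j : ℕ) = y)) →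
    MvPolynomial.coeff (crnMon y s (N.U i ((j : ℕ) + 1))) (N.deriv k q x) ≠ 0 →
    ∃ i' : N.ι, ∃ j' : Fin (N.L i'), ∃ zw : σ, ∃ d : ℕ,
      ¬ N.inter zw ∧ zw ≠ x ∧ zw ≠ y ∧
      ((y = N.Y i' ∧ zw = N.S i' (j' : ℕ)) ∨ (y = N.S i' (j' : ℕ) ∧ zw = N.Y i')) ∧
      x = N.S i' ((j' : ℕ) + 1) ∧
      d ≤ s ∧ s + d + 1 ≤ q ∧
      Link N k y (N.U iu ((ju : ℕ) + 1)) zw v d ∧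
      ((y = N.Y iu ∧ ∃ jv, jv ≤ N.L iu ∧ v = N.S iu jv) → (i' = iu ∧ y = N.Y i'))

variable {N k y x iu ju}

lemma mainB (h1 : N.Assumption1) (hp : N.IsPartition part) (hk : ∀ r, 0 < k r)
    (hy : ¬ N.inter y) (hx : ¬ N.inter x) (hyx : y ≠ x) :
    ∀ q : ℕ, StmtB N k y x iu ju q ∧ StmtBA N k y x iu ju q := by
  have hxy : x ≠ y := hyx.symm
  have packX : ∀ p : ℕ, Pack N k y (N.deriv k p x) ((-1) ^ p) p 0 :=
    pack_deriv_nonint h1 hp hk hy hx hxy hyx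
  intro q
  induction q using Nat.strong_induction_on with
  | _ q IH =>
  constructor
  · -- StmtB
    intro s v hv hvy hvx hne
    match q, hne with
    | 0, hne =>
      exfalso
      apply hne
      show MvPolynomial.coeff _ (X x) = 0
      rw [MvPolynomial.coeff_X', if_neg]
      intro h
      exact hvx (crn_mon_eq_single hvy hyx h.symm).2
    | (q' + 1), hne =>
      rw [deriv_succ] at hne
      obtain ⟨i1, j1, hs, hpair1, hpred⟩ :=
        backward_B h1 hp hk hy hv hvy (fun t => (packX q').2.2.1 t) hne
      rcases hpred with hpred | hpred
      · -- switch to the intermediate: use StmtBA at q'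
        obtain ⟨i', j', zw, d, hzw1, hzw2, hzw3, hzwpair, hxS, hd1, hd2, hlink, henz⟩ :=
          (IH q' (by omega)).2 (s - 1) i1 j1 v hv hvy hvx hpair1 hpred
        exact ⟨i', j', zw, d, hzw1, hzw2, hzw3, hzwpair, hxS, by omega, by omega, hlink,
          ⟨i1, j1, hpair1⟩, henz⟩
      · -- stay with the same shape at q'
        obtain ⟨i', j', zw, d, hzw1, hzw2, hzw3, hzwpair, hxS, hd1, hd2, hlink, hpump, henz⟩ :=
          (IH q' (by omega)).1 (s - 1) v hv hvy hvx hpred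
        exact ⟨i', j', zw, d, hzw1, hzw2, hzw3, hzwpair, hxS, by omega, by omega, hlink,
          hpump, henz⟩
  · -- StmtBA
    intro s i j v hv hvy hvx hpair hne
    match q, hne with
    | 0, hne =>
      exfalso
      apply hne
      show MvPolynomial.coeff _ (X x) = 0
      rw [MvPolynomial.coeff_X', if_neg]
      intro h
      obtain ⟨-, h2⟩ := crn_mon_eq_single
        (fact_ne_of_nonint (inter_U N i j) hy) hyx h.symm
      exact hx (h2 ▸ inter_U N i j)
    | (q' + 1), hne =>
      rw [deriv_succ] at hne
      rcases backward_A h1 hp hk hy i j (fun t => (packX q').2.2.1 t) hne with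
        hpred | ⟨w', hmem, hw'y, hpred⟩
      · -- persistence
        obtain ⟨i', j', zw, d, hzw1, hzw2, hzw3, hzwpair, hxS, hd1, hd2, hlink, henz⟩ :=
          (IH q' (by omega)).2 s i j v hv hvy hvx hpair hpred
        exact ⟨i', j', zw, d, hzw1, hzw2, hzw3, hzwpair, hxS, hd1, by omega, hlink, henz⟩
      · have hw'ni : ¬ N.inter w' := by
          rcases hmem with h | h | h
          · rw [h]; exact fact_nonint_Y hp i
          · rw [h]; exact fact_nonint_S hp i (j : ℕ) (le_of_lt j.isLt)
          · rw [h]; exact fact_nonint_S hp i ((j : ℕ) + 1) j.isLt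
        by_cases hw'x : w' = x
        · -- detection: `x` is the product species of this block
          rw [hw'x] at hpred hmem
          have hxSij : x = N.S i ((j : ℕ) + 1) := by
            rcases hmem with h | h | h
            · exfalso
              rcases hpair with ⟨hY, -⟩ | ⟨hY, -⟩
              · exact hyx (hY ▸ h).symm
              · exact hvx (hY ▸ h).symm
            · exfalso
              rcases hpair with ⟨-, hS⟩ | ⟨-, hS⟩
              · exact hvx (hS ▸ h).symm
              · exact hyx (hS ▸ h).symm
            · exact h
          have hsq : s ≤ q' := by
            by_contra hc
            exact hpred ((packX q').2.2.2.1 s x hxy hx (by omega))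
          refine ⟨i, j, v, 0, hv, hvx, hvy, ?_, hxSij, by omega, by omega,
            Link_refl _ _, ?_⟩
          · rcases hpair with ⟨hY, hS⟩ | ⟨hY, hS⟩
            · exact Or.inl ⟨hY.symm, hS.symm⟩
            · exact Or.inr ⟨hS.symm, hY.symm⟩
          · rintro ⟨hyY, jv, hjv, hveq⟩
            exact enzyme_id h1 hp hyY hjv hveq hpair
        · -- recurse through `w'` with StmtB at q'
          obtain ⟨i', j', zw, d', hzw1, hzw2, hzw3, hzwpair, hxS, hd1, hd2, hlink, hpump', henz'⟩ :=
            (IH q' (by omega)).1 s w' hw'ni hw'y hw'x hpred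
          refine ⟨i', j', zw, d' + 1, hzw1, hzw2, hzw3, hzwpair, hxS, by omega, by omega,
            ?_, ?_⟩
          · refine Link_comp hlink ?_
            intro c p hcp
            exact (lift h1 hp hk hy hv hvy hw'ni hw'y hpair hmem p).2 c iu ju hcp
          · rintro ⟨hyY, jv, hjv, hveq⟩
            obtain ⟨hiiu, hyYi⟩ := enzyme_id h1 hp hyY hjv hveq hpair
            subst hiiu
            apply henz'
            refine ⟨hyY, ?_⟩
            rcases hmem with h | h | h
            · exact absurd (h.trans hyYi.symm) hw'y
            · exact ⟨(j : ℕ), le_of_lt j.isLt, h⟩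
            · exact ⟨(j : ℕ) + 1, j.isLt, h⟩
  termination_by q
  decreasing_by all_goals omega



lemma core (h1 : N.Assumption1) (hp : N.IsPartition part) (hk : ∀ r, 0 < k r)
    (hy : ¬ N.inter y) (hx : ¬ N.inter x) (hyx : y ≠ x)
    (hnr : ¬ N.reactsTo (N.U iu ((ju : ℕ) + 1)) x) {r ℓ : ℕ}
    (happ : MvPolynomial.coeff (crnMon y r (N.U iu ((ju : ℕ) + 1)))
      (N.deriv k ℓ x) ≠ 0) :
    ∃ i : N.ι, ∃ j : Fin (N.L i), ∃ zw : σ,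
      ¬ N.inter zw ∧ zw ≠ x ∧
      ((y = N.Y i ∧ zw = N.S i (j : ℕ)) ∨ (y = N.S i (j : ℕ) ∧ zw = N.Y i)) ∧
      x = N.S i ((j : ℕ) + 1) ∧ 1 ≤ r ∧ 3 ≤ ℓ ∧
      (y = N.Y iu → i = iu ∧ y = N.Y i) ∧
      ∃ ii : ℕ, ii ≤ ℓ - 2 ∧
        MvPolynomial.coeff (crnMon y (r - 1) (N.U iu ((ju : ℕ) + 1)))
          (N.deriv k ii zw) ≠ 0 := by
  classical
  have hui : N.inter (N.U iu ((ju : ℕ) + 1)) := inter_U N iu ju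
  have huy : N.U iu ((ju : ℕ) + 1) ≠ y := fact_ne_of_nonint hui hy
  have packX : ∀ p : ℕ, Pack N k y (N.deriv k p x) ((-1) ^ p) p 0 :=
    pack_deriv_nonint h1 hp hk hy hx hyx.symm hyx
  have hexists : ∃ p, MvPolynomial.coeff (crnMon y r (N.U iu ((ju : ℕ) + 1)))
      (N.deriv k p x) ≠ 0 := ⟨ℓ, happ⟩
  have hl0le : Nat.find hexists ≤ ℓ := Nat.find_min' hexists happ
  obtain ⟨q0, hq0⟩ : ∃ q0, Nat.find hexists = q0 + 1 := by
    have hne0 : Nat.find hexists ≠ 0 := by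
      intro h0
      have hs := Nat.find_spec hexists
      rw [h0] at hs
      apply hs
      show MvPolynomial.coeff _ (X x) = 0
      rw [MvPolynomial.coeff_X', if_neg]
      intro h
      obtain ⟨-, h2⟩ := crn_mon_eq_single huy hyx h.symm
      exact hx (h2 ▸ hui)
    exact ⟨Nat.find hexists - 1, by omega⟩
  have hspec := Nat.find_spec hexists
  rw [hq0, deriv_succ] at hspec
  rcases backward_A h1 hp hk hy iu ju (fun t => (packX q0).2.2.1 t) hspec with
    hpred | ⟨v1, hmem, hv1y, hv1ne⟩
  · exfalso
    have := Nat.find_min hexists (show q0 < Nat.find hexists by omega)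
    exact this hpred
  · have hv1ni : ¬ N.inter v1 := by
      rcases hmem with h | h | h
      · rw [h]; exact fact_nonint_Y hp iu
      · rw [h]; exact fact_nonint_S hp iu (ju : ℕ) (le_of_lt ju.isLt)
      · rw [h]; exact fact_nonint_S hp iu ((ju : ℕ) + 1) ju.isLt
    have hv1x : v1 ≠ x := by
      intro h
      apply hnr
      refine ⟨iu, ju, rfl, ?_⟩
      rcases hmem with hm | hm | hm
      · exact Or.inl (h ▸ hm)
      · exact Or.inr (Or.inl (h ▸ hm))
      · exact Or.inr (Or.inr (h ▸ hm))
    obtain ⟨i, j, zw, d, hzw1, hzw2, hzw3, hzwpair, hxS, hd1, hd2, hlink,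
      ⟨i1, j1, hpump1⟩, henz⟩ :=
      (mainB h1 hp hk hy hx hyx q0).1 r v1 hv1ni hv1y hv1x hv1ne
    have packV1 : ∀ p : ℕ, Pack N k y (N.deriv k p v1) ((-1) ^ p) p 0 :=
      pack_deriv_nonint h1 hp hk hy hv1ni hv1y hv1y.symm
    have hpv := pump h1 hp hk hy hv1ni hv1y hpump1
    have hpumpU : MvPolynomial.coeff (crnMon y (r - 1 - d) (N.U iu ((ju : ℕ) + 1)))
        (N.deriv k ((r - 1 - d) + 1) v1) ≠ 0 := by
      rw [deriv_succ]
      exact forward_T2 h1 hp hk hy (neg_one_pow_pm (r - 1 - d)) (packV1 (r - 1 - d))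
        iu ju hmem hv1y (r - 1 - d) (hpv (r - 1 - d))
    have hlinked := hlink (r - 1 - d) ((r - 1 - d) + 1) hpumpU
    rw [show r - 1 - d + d = r - 1 by omega,
      show r - 1 - d + 1 + 2 * d = r + d by omega] at hlinked
    refine ⟨i, j, zw, hzw1, hzw2, hzwpair, hxS, by omega, by omega, ?_, r + d,
      by omega, hlinked⟩
    intro hyY
    apply henz
    refine ⟨hyY, ?_⟩
    rcases hmem with hm | hm | hm
    · exact absurd (hm.trans hyY.symm) hv1y
    · exact ⟨(ju : ℕ), le_of_lt ju.isLt, hm⟩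
    · exact ⟨(ju : ℕ) + 1, ju.isLt, hm⟩

end Main


/-- **Lemma.** For a network satisfying Assumptions 1 and 2, let `u` be the intermediate
of block `ju+1` of component `iu`, and `x`, `y` non-intermediates with `y ≠ x`. If the
monomial `y^r · u` appears in `x^{(ℓ)}`, `ℓ ≥ 1`, then either `u` reacts to `x`, or
`ℓ ≥ 2` and the network contains a block of reactions `Y + Z_w ⇄ W → Z̃_w + X` with
`Z_w ≠ X` (in Assumption-1 form: some block `j+1` of a component `i`, with
`{y, z_w} = {Y i, S i j}` and `x` one of the species of the product complex
`Y i + S i (j+1)`), and a monomial `y^t · u` with `t < r` appears in `z_w^{(i)}` for some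
`i ≤ ℓ - 2`. If in addition `y` acts as the enzyme of the component of `u`, then
`x ∈ 𝒮_U`, the block is `Y + Z_w ⇄ W → Y + X` and it lies in the component of `u`.
Moreover, if `u` does not react to `x` and `ℓ` is smallest such that some monomial
`y^r · u` appears in `x^{(ℓ)}`, then `r ≥ 1`, `ℓ ≥ 2`, and `y^{r-1} · u` appears in
`z_w^{(i)}` for some `i ≤ ℓ - 2`. -/
theorem monomial_y_pow_u_structure
    (N : A1Network σ) (h1 : N.Assumption1) (h2 : N.Assumption2)
    (k : N.Param → ℝ) (hk : ∀ r, 0 < k r)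
    (u x y : σ) (iu : N.ι) (ju : Fin (N.L iu)) (hu : u = N.U iu ((ju : ℕ) + 1))
    (hx : ¬ N.inter x) (hy : ¬ N.inter y) (hyx : y ≠ x)
    (r ℓ : ℕ) (hℓ : 1 ≤ ℓ)
    (happ : MvPolynomial.coeff (Finsupp.single y r + Finsupp.single u 1)
      (N.deriv k ℓ x) ≠ 0) :
    (N.reactsTo u x ∨
      (2 ≤ ℓ ∧ ∃ i, ∃ j : Fin (N.L i), ∃ zw : σ,
        zw ≠ x ∧
        ((y = N.Y i ∧ zw = N.S i (j : ℕ)) ∨ (y = N.S i (j : ℕ) ∧ zw = N.Y i)) ∧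
        (x = N.Y i ∨ x = N.S i ((j : ℕ) + 1)) ∧
        (y = N.Y iu →
          (∃ j', j' ≤ N.L iu ∧ x = N.S iu j') ∧
            i = iu ∧ y = N.Y i ∧ x = N.S i ((j : ℕ) + 1)) ∧
        ∃ t, t < r ∧ ∃ ii, ii ≤ ℓ - 2 ∧
          MvPolynomial.coeff (Finsupp.single y t + Finsupp.single u 1)
            (N.deriv k ii zw) ≠ 0))
    ∧ (¬ N.reactsTo u x →
        (∀ ℓ' < ℓ, ∀ r' : ℕ,
          MvPolynomial.coeff (Finsupp.single y r' + Finsupp.single u 1)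
            (N.deriv k ℓ' x) = 0) →
        1 ≤ r ∧ 2 ≤ ℓ ∧ ∃ i, ∃ j : Fin (N.L i), ∃ zw : σ,
          zw ≠ x ∧
          ((y = N.Y i ∧ zw = N.S i (j : ℕ)) ∨ (y = N.S i (j : ℕ) ∧ zw = N.Y i)) ∧
          (x = N.Y i ∨ x = N.S i ((j : ℕ) + 1)) ∧
          ∃ ii, ii ≤ ℓ - 2 ∧
            MvPolynomial.coeff (Finsupp.single y (r - 1) + Finsupp.single u 1)
              (N.deriv k ii zw) ≠ 0) := by

  obtain ⟨part, hp⟩ := h2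
  subst hu
  rw [← crnMon_def] at happ
  by_cases hrt : N.reactsTo (N.U iu ((ju : ℕ) + 1)) x
  · exact ⟨Or.inl hrt, fun hnr _ => absurd hrt hnr⟩
  · obtain ⟨i, j, zw, hzwni, hzwx, hzwpair, hxS, hr1, hl3, henz, ii, hii, hcoeff⟩ :=
      core h1 hp hk hy hx hyx hrt happ
    rw [crnMon_def] at hcoeff
    constructor
    · right
      refine ⟨by omega, i, j, zw, hzwx, hzwpair, Or.inr hxS, ?_, r - 1, by omega,
        ii, hii, hcoeff⟩
      intro hyY
      obtain ⟨hiiu, hyYi⟩ := henz hyY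
      subst hiiu
      exact ⟨⟨(j : ℕ) + 1, j.isLt, hxS⟩, rfl, hyYi, hxS⟩
    · intro hnr _
      exact ⟨hr1, by omega, i, j, zw, hzwx, hzwpair, Or.inr hxS, ii, hii, hcoeff⟩


end A1Network
end

section
/- For a reaction network satisfying Assumptions 1 and 2, if a monomial u·∏_{i=1}^M z_i with M ≥ 1, where U is an intermediate species and X and all the Z_i are non-intermediate species, appears in x^{(ℓ)} for some ℓ ≥ 1, then either there exist 1 ≤ i_1 < i_2 ≤ M such that Z_{i_1} reacts with Z_{i_2}, or there exist 1 ≤ i_0 ≤ M and a non-intermediate species V that reacts with Z_{i_0} such that U reacts to a complex containing V. -/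
open MvPolynomial Finsupp

variable {σ : Type*}

namespace A1Network

variable [Fintype σ] [DecidableEq σ]

/-- Total degree of an exponent vector, as an additive monoid hom. -/
def expTotal : (σ →₀ ℕ) →+ ℕ where
  toFun f := f.sum fun _ v => v
  map_zero' := Finsupp.sum_zero_index
  map_add' f g := by
    exact Finsupp.sum_add_index' (h := fun _ v => v) (fun _ => rfl)
      (fun _ _ _ => rfl)

lemma expTotal_single (a : σ) (b : ℕ) : expTotal (Finsupp.single a b) = b := by
  show (Finsupp.single a b).sum (fun _ v => v) = b
  exact Finsupp.sum_single_index rfl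

lemma coeff_pderiv_aux (i : σ) (φ : MvPolynomial σ ℝ) (d : σ →₀ ℕ) :
    MvPolynomial.coeff d (MvPolynomial.pderiv i φ) =
      ((d i : ℝ) + 1) * MvPolynomial.coeff (d + Finsupp.single i 1) φ := by
  induction φ using MvPolynomial.induction_on' with
  | add p q hp hq => simp [map_add, hp, hq, mul_add]
  | monomial s a =>
    rw [MvPolynomial.pderiv_monomial, MvPolynomial.coeff_monomial,
      MvPolynomial.coeff_monomial]
    by_cases h : s = d + Finsupp.single i 1
    · subst h
      rw [if_pos (by rw [add_tsub_cancel_right]), if_pos rfl,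
        Finsupp.add_apply, Finsupp.single_eq_same]
      push_cast; ring
    · rw [if_neg h]
      by_cases h2 : s - Finsupp.single i 1 = d
      · rw [if_pos h2]
        have hsi : s i = 0 := by
          by_contra hsi
          apply h
          ext t
          have h3 := congrArg (fun f : σ →₀ ℕ => f t) h2
          simp only [Finsupp.tsub_apply, Finsupp.add_apply,
            Finsupp.single_apply] at h3 ⊢
          rcases eq_or_ne i t with rfl | ht
          · simp at h3 ⊢
            omega
          · simp [ht] at h3 ⊢
            omega
        simp [hsi]
      · rw [if_neg h2]; ring

lemma lieD_step {f : σ → MvPolynomial σ ℝ} {φ : MvPolynomial σ ℝ} {m : σ →₀ ℕ}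
    (h : MvPolynomial.coeff m (lieD f φ) ≠ 0) :
    ∃ (w : σ) (d n : σ →₀ ℕ),
      MvPolynomial.coeff (d + Finsupp.single w 1) φ ≠ 0 ∧
      MvPolynomial.coeff n (f w) ≠ 0 ∧ m = d + n := by
  rw [lieD, MvPolynomial.coeff_sum] at h
  obtain ⟨w, -, hw⟩ := Finset.exists_ne_zero_of_sum_ne_zero h
  rw [MvPolynomial.coeff_mul] at hw
  obtain ⟨⟨d, n⟩, hmem, hdn⟩ := Finset.exists_ne_zero_of_sum_ne_zero hw
  refine ⟨w, d, n, ?_, ?_, (Finset.HasAntidiagonal.mem_antidiagonal.mp hmem).symm⟩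
  · intro h0
    apply hdn
    have h1 : MvPolynomial.coeff d (MvPolynomial.pderiv w φ) = 0 := by
      rw [coeff_pderiv_aux, h0, mul_zero]
    simp only [h1, zero_mul]
  · intro h0
    apply hdn
    simp only [h0, mul_zero]

lemma rhs_mono (N : A1Network σ) (k : N.Param → ℝ) (w : σ) (n : σ →₀ ℕ)
    (h : MvPolynomial.coeff n (N.rhs k w) ≠ 0) :
    ∃ i, ∃ j : Fin (N.L i),
      n = Finsupp.single (N.Y i) 1 + Finsupp.single (N.S i (j : ℕ)) 1 ∨
      (n = Finsupp.single (N.U i ((j : ℕ) + 1)) 1 ∧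
        (w = N.Y i ∨ w = N.S i (j : ℕ) ∨ w = N.S i ((j : ℕ) + 1) ∨
          w = N.U i ((j : ℕ) + 1))) := by
  have tri : ∀ a b c : ℝ, a + b + c ≠ 0 → a ≠ 0 ∨ b ≠ 0 ∨ c ≠ 0 := by
    intro a b c habc
    by_contra hcon
    push_neg at hcon
    rw [hcon.1, hcon.2.1, hcon.2.2] at habc
    simp at habc
  rw [rhs, MvPolynomial.coeff_sum] at h
  obtain ⟨i, -, hi⟩ := Finset.exists_ne_zero_of_sum_ne_zero h
  rw [MvPolynomial.coeff_sum] at hi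
  obtain ⟨j, -, hj⟩ := Finset.exists_ne_zero_of_sum_ne_zero hi
  refine ⟨i, j, ?_⟩
  rw [MvPolynomial.coeff_add, MvPolynomial.coeff_add] at hj
  rcases tri _ _ _ hj with hA | hB | hC
  · left
    rw [MvPolynomial.coeff_C_mul] at hA
    have hprod := right_ne_zero_of_mul hA
    have hXX : (MvPolynomial.X (N.Y i) * MvPolynomial.X (N.S i (j : ℕ)) :
        MvPolynomial σ ℝ) = MvPolynomial.monomial
          (Finsupp.single (N.Y i) 1 + Finsupp.single (N.S i (j : ℕ)) 1) 1 := by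
      simp only [MvPolynomial.X, MvPolynomial.monomial_mul, mul_one]
    rw [hXX, MvPolynomial.coeff_monomial] at hprod
    by_cases he : Finsupp.single (N.Y i) 1 + Finsupp.single (N.S i (j : ℕ)) 1 = n
    · exact he.symm
    · simp [he] at hprod
  · right
    rw [MvPolynomial.coeff_C_mul] at hB
    have hc := left_ne_zero_of_mul hB
    have hX := right_ne_zero_of_mul hB
    rw [MvPolynomial.coeff_X'] at hX
    by_cases he : Finsupp.single (N.U i ((j : ℕ) + 1)) 1 = n
    · refine ⟨he.symm, ?_⟩
      have he2 := right_ne_zero_of_mul hc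
      by_contra hwc
      push_neg at hwc
      obtain ⟨w1, w2, w3, w4⟩ := hwc
      apply he2
      simp [ind, Ne.symm w1, Ne.symm w2, Ne.symm w4]
    · simp [he] at hX
  · right
    rw [MvPolynomial.coeff_C_mul] at hC
    have hc := left_ne_zero_of_mul hC
    have hX := right_ne_zero_of_mul hC
    rw [MvPolynomial.coeff_X'] at hX
    by_cases he : Finsupp.single (N.U i ((j : ℕ) + 1)) 1 = n
    · refine ⟨he.symm, ?_⟩
      have he2 := right_ne_zero_of_mul hc
      by_contra hwc
      push_neg at hwc
      obtain ⟨w1, w2, w3, w4⟩ := hwc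
      apply he2
      simp [ind, Ne.symm w1, Ne.symm w3, Ne.symm w4]
    · simp [he] at hX

/-- **Lemma.** For a network satisfying Assumptions 1 and 2, if a monomial
`u · ∏_{i=1}^M z_i` with `M ≥ 1`, where `u` is an intermediate species and `x` and all
the `Z i` are non-intermediate species, appears in `x^{(ℓ)}` for some `ℓ ≥ 1`, then
either there exist `i₁ < i₂` with `Z i₁` reacting with `Z i₂`, or there exist `i₀` and a
non-intermediate species `V` reacting with `Z i₀` such that `u` reacts to a complex
containing `V`. -/
theorem intermediate_times_product_monomial
    (N : A1Network σ) (h1 : N.Assumption1) (h2 : N.Assumption2)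
    (k : N.Param → ℝ) (hk : ∀ r, 0 < k r)
    (x u : σ) (hx : ¬ N.inter x) (hu : N.inter u)
    (M : ℕ) (hM : 1 ≤ M) (z : Fin M → σ) (hz : ∀ i, ¬ N.inter (z i))
    (ℓ : ℕ) (hℓ : 1 ≤ ℓ)
    (happ : MvPolynomial.coeff
      (Finsupp.single u 1 + ∑ i, Finsupp.single (z i) 1) (N.deriv k ℓ x) ≠ 0) :
    (∃ i₁ i₂ : Fin M, i₁ < i₂ ∧ N.reactsWith (z i₁) (z i₂))
    ∨ (∃ i₀ : Fin M, ∃ v : σ, ¬ N.inter v ∧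
        N.reactsWith v (z i₀) ∧ N.reactsTo u v) := by
  classical
  obtain ⟨part, hp0, hpcomp⟩ := h2
  have hYni : ∀ i : N.ι, ¬ N.inter (N.Y i) := by
    intro i hi
    obtain ⟨α, hα, hS, hYα, hY0⟩ := hpcomp i
    exact hY0 (hp0 _ hi)
  have hSni : ∀ (i : N.ι) (j : ℕ), j ≤ N.L i → ¬ N.inter (N.S i j) := by
    intro i j hjle hi
    obtain ⟨α, hα, hS, hYα, hY0⟩ := hpcomp i
    have h5 := hp0 _ hi
    rw [hS j hjle] at h5
    omega
  have hYS : ∀ (i : N.ι) (j : ℕ), j ≤ N.L i → N.Y i ≠ N.S i j := by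
    intro i j hjle he
    obtain ⟨α, hα, hS, hYα, hY0⟩ := hpcomp i
    exact hYα (by rw [he, hS j hjle])
  set msum : σ →₀ ℕ := ∑ i, Finsupp.single (z i) 1 with hmsum
  have hmem : ∀ (v s : σ), ((msum + Finsupp.single v 1 : σ →₀ ℕ) s) ≠ 0 →
      s = v ∨ ∃ i, s = z i := by
    intro v s hs
    by_contra hc
    push_neg at hc
    apply hs
    have h1 : msum s = 0 := by
      rw [hmsum, Finsupp.finset_sum_apply]
      exact Finset.sum_eq_zero fun i _ =>
        Finsupp.single_eq_of_ne' (Ne.symm (hc.2 i))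
    rw [Finsupp.add_apply, h1, Finsupp.single_eq_of_ne' (Ne.symm hc.1)]
    rfl
  have tot_msum : expTotal msum = M := by
    rw [hmsum, map_sum]
    simp [expTotal_single]
  have tot_m : expTotal (Finsupp.single u 1 + msum) = 1 + M := by
    rw [map_add, expTotal_single, tot_msum]
  have tot_mv : ∀ v : σ, expTotal (msum + Finsupp.single v 1) = M + 1 := by
    intro v
    rw [map_add, expTotal_single, tot_msum]
  have key : ∀ ℓ : ℕ, 1 ≤ ℓ →
      MvPolynomial.coeff (Finsupp.single u 1 + msum) (N.deriv k ℓ x) ≠ 0 →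
      ((∃ i₁ i₂ : Fin M, i₁ < i₂ ∧ N.reactsWith (z i₁) (z i₂))
        ∨ (∃ i₀ : Fin M, ∃ v : σ, ¬ N.inter v ∧
            N.reactsWith v (z i₀) ∧ N.reactsTo u v)) := by
    intro ℓ
    induction ℓ using Nat.strong_induction_on with
    | _ ℓ ih =>
      intro hℓ1 happ2
      obtain ⟨t, rfl⟩ : ∃ t, ℓ = t + 1 := ⟨ℓ - 1, by omega⟩
      have hstep : N.deriv k (t + 1) x = lieD (N.rhs k) (N.deriv k t x) := rfl
      rw [hstep] at happ2
      obtain ⟨w, d, n, hm', hn, hmdn⟩ := lieD_step happ2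
      obtain ⟨i, j, hc⟩ := N.rhs_mono k w n hn
      have hjle : (j : ℕ) ≤ N.L i := le_of_lt j.isLt
      have hj1le : (j : ℕ) + 1 ≤ N.L i := j.isLt
      rcases hc with hpair | ⟨hsingle, hwmem⟩
      · left
        have hY : ((msum + Finsupp.single u 1 : σ →₀ ℕ) (N.Y i)) ≠ 0 := by
          rw [add_comm msum, hmdn, hpair]
          simp only [Finsupp.add_apply, Finsupp.single_eq_same]
          omega
        have hS : ((msum + Finsupp.single u 1 : σ →₀ ℕ) (N.S i (j : ℕ))) ≠ 0 := by
          rw [add_comm msum, hmdn, hpair]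
          simp only [Finsupp.add_apply, Finsupp.single_eq_same]
          omega
        have hYz : ∃ i₁, N.Y i = z i₁ := by
          rcases hmem u _ hY with he | he
          · exact absurd (by rw [he]; exact hu) (hYni i)
          · exact he
        have hSz : ∃ i₂, N.S i (j : ℕ) = z i₂ := by
          rcases hmem u _ hS with he | he
          · exact absurd (by rw [he]; exact hu) (hSni i _ hjle)
          · exact he
        obtain ⟨i₁, hzY⟩ := hYz
        obtain ⟨i₂, hzS⟩ := hSz
        have hne : i₁ ≠ i₂ := fun he => hYS i _ hjle (by rw [hzY, hzS, he])
        rcases lt_or_gt_of_ne hne with hlt | hgt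
        · exact ⟨i₁, i₂, hlt, i, j, Or.inl ⟨hzY.symm, hzS.symm⟩⟩
        · exact ⟨i₂, i₁, hgt, i, j, Or.inr ⟨hzY.symm, hzS.symm⟩⟩
      · have hUu : N.U i ((j : ℕ) + 1) = u := by
          have hUpos : ((msum + Finsupp.single u 1 : σ →₀ ℕ) (N.U i ((j : ℕ) + 1))) ≠ 0 := by
            rw [add_comm msum, hmdn, hsingle]
            simp only [Finsupp.add_apply, Finsupp.single_eq_same]
            omega
          rcases hmem u _ hUpos with he | ⟨i', he⟩
          · exact he
          · exact absurd ⟨i, j, he.symm⟩ (hz i')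
        have hd : d = msum := by
          ext s
          have h5 := congrArg (fun f : σ →₀ ℕ => f s) hmdn
          rw [hsingle, hUu] at h5
          simp only [Finsupp.add_apply] at h5
          omega
        have vcase : ∀ v : σ, ¬ N.inter v → N.reactsTo u v → w = v →
            ((∃ i₁ i₂ : Fin M, i₁ < i₂ ∧ N.reactsWith (z i₁) (z i₂))
              ∨ (∃ i₀ : Fin M, ∃ v' : σ, ¬ N.inter v' ∧
                  N.reactsWith v' (z i₀) ∧ N.reactsTo u v')) := by
          intro v hvni hvto hwv
          subst hwv
          rw [hd] at hm'
          rcases Nat.eq_zero_or_pos t with rfl | ht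
          · exfalso
            have h0 : N.deriv k 0 x = MvPolynomial.X x := rfl
            rw [h0, MvPolynomial.coeff_X'] at hm'
            by_cases he : Finsupp.single x 1 = msum + Finsupp.single w 1
            · have h6 := congrArg expTotal he
              rw [expTotal_single, tot_mv] at h6
              omega
            · simp [he] at hm'
          · obtain ⟨r, rfl⟩ : ∃ r, t = r + 1 := ⟨t - 1, by omega⟩
            have hstep2 : N.deriv k (r + 1) x = lieD (N.rhs k) (N.deriv k r x) := rfl
            rw [hstep2] at hm'
            obtain ⟨w', d', n', hm'', hn', hmdn'⟩ := lieD_step hm'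
            obtain ⟨i', j', hc'⟩ := N.rhs_mono k w' n' hn'
            have hj'le : (j' : ℕ) ≤ N.L i' := le_of_lt j'.isLt
            rcases hc' with hpair' | ⟨hsingle', -⟩
            · have hY' : ((msum + Finsupp.single w 1 : σ →₀ ℕ) (N.Y i')) ≠ 0 := by
                rw [hmdn', hpair']
                simp only [Finsupp.add_apply, Finsupp.single_eq_same]
                omega
              have hS' : ((msum + Finsupp.single w 1 : σ →₀ ℕ) (N.S i' (j' : ℕ))) ≠ 0 := by
                rw [hmdn', hpair']
                simp only [Finsupp.add_apply, Finsupp.single_eq_same]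
                omega
              rcases hmem w _ hY' with heY | ⟨i₁, heY⟩
              · rcases hmem w _ hS' with heS | ⟨i₂, heS⟩
                · exact absurd (heY.trans heS.symm) (hYS i' _ hj'le)
                · exact Or.inr ⟨i₂, w, hvni,
                    ⟨i', j', Or.inl ⟨heY.symm, heS.symm⟩⟩, hvto⟩
              · rcases hmem w _ hS' with heS | ⟨i₂, heS⟩
                · exact Or.inr ⟨i₁, w, hvni,
                    ⟨i', j', Or.inr ⟨heY.symm, heS.symm⟩⟩, hvto⟩
                · left
                  have hne : i₁ ≠ i₂ := fun he =>
                    hYS i' _ hj'le (by rw [heY, heS, he])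
                  rcases lt_or_gt_of_ne hne with hlt | hgt
                  · exact ⟨i₁, i₂, hlt, i', j', Or.inl ⟨heY.symm, heS.symm⟩⟩
                  · exact ⟨i₂, i₁, hgt, i', j', Or.inr ⟨heY.symm, heS.symm⟩⟩
            · exfalso
              have hU' : ((msum + Finsupp.single w 1 : σ →₀ ℕ)
                  (N.U i' ((j' : ℕ) + 1))) ≠ 0 := by
                rw [hmdn', hsingle']
                simp only [Finsupp.add_apply, Finsupp.single_eq_same]
                omega
              rcases hmem w _ hU' with he | ⟨i₁, he⟩
              · exact hvni ⟨i', j', he.symm⟩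
              · exact hz i₁ ⟨i', j', he.symm⟩
        rcases hwmem with hw | hw | hw | hw
        · exact vcase _ (hYni i) ⟨i, j, hUu.symm, Or.inl rfl⟩ hw
        · exact vcase _ (hSni i _ hjle) ⟨i, j, hUu.symm, Or.inr (Or.inl rfl)⟩ hw
        · exact vcase _ (hSni i _ hj1le)
            ⟨i, j, hUu.symm, Or.inr (Or.inr rfl)⟩ hw
        · have hm2 : MvPolynomial.coeff (Finsupp.single u 1 + msum)
              (N.deriv k t x) ≠ 0 := by
            rw [hd, hw, hUu] at hm'
            rwa [add_comm]
          rcases Nat.eq_zero_or_pos t with rfl | ht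
          · exfalso
            have h0 : N.deriv k 0 x = MvPolynomial.X x := rfl
            rw [h0, MvPolynomial.coeff_X'] at hm2
            by_cases he : Finsupp.single x 1 = Finsupp.single u 1 + msum
            · have h6 := congrArg expTotal he
              rw [expTotal_single, tot_m] at h6
              omega
            · simp [he] at hm2
          · exact ih t (by omega) ht hm2
  exact key ℓ hℓ happ

end A1Network
end
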